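/- arXiv:2205.01910 — 2 statements merged into one kernel-verified Lean document; each statement's English description precedes it below -/
import Mathlib

section
/- Let s, k be nonnegative integers, λ ∈ [0,1], δ, δ' ∈ ℝ, and T > 0. If u ∈ C^{k,s(s,λ,δ)}_T and v ∈ C^{k,s(s,λ,δ')}_T, then the pointwise product uv belongs to C^{k,s(s,λ,δ+δ')}_T and ‖uv‖_{C^{k,s(s,λ,δ+δ')}_T} ≤ c · ‖u‖_{C^{k,s(s,λ,δ)}_T} · ‖v‖_{C^{k,s(s,λ,δ')}_T}, with a constant c > 0 independent of u and v. -/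
open scoped BigOperators ENNReal Classical
open Filter MeasureTheory

noncomputable section

namespace NSdeRham

/-- Euclidean space `ℝⁿ`. -/
abbrev Spc (n : ℕ) := EuclideanSpace ℝ (Fin n)

variable {n : ℕ}

/-- The weight `w(x) = √(1+|x|²)`. -/
def wt (x : Spc n) : ℝ := Real.sqrt (1 + ‖x‖ ^ 2)

/-- `w(x,y) = max (w x) (w y)`. -/
def wt2 (x y : Spc n) : ℝ := max (wt x) (wt y)

/-- Partial derivative in the `i`-th coordinate direction. -/
def pd (i : Fin n) (f : Spc n → ℝ) (x : Spc n) : ℝ :=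
  fderiv ℝ f x (EuclideanSpace.single i 1)

/-- The Laplace operator `Δ = ∑ ∂²/∂xᵢ²`. -/
def lap (f : Spc n → ℝ) (x : Spc n) : ℝ := ∑ i : Fin n, pd i (pd i f) x

section enorms

variable {F : Type*} [NormedAddCommGroup F]

/-- Weighted sup-"norm" `sup_x w(x)^δ ‖g x‖` (with values in `ℝ≥0∞`). -/
def eWSup (δ : ℝ) (g : Spc n → F) : ℝ≥0∞ :=
  ⨆ x : Spc n, ENNReal.ofReal (wt x ^ δ * ‖g x‖)

/-- Weighted Hölder seminorm `⟨g⟩_{λ,δ}`. -/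
def eWHold (lam δ : ℝ) (g : Spc n → F) : ℝ≥0∞ :=
  ⨆ (x : Spc n) (y : Spc n) (_ : x ≠ y ∧ ‖x - y‖ ≤ ‖x‖ / 2),
    ENNReal.ofReal (wt2 x y ^ (δ + lam) * ‖g x - g y‖ / ‖x - y‖ ^ lam)

/-- The ordinary Hölder norm on the (closed) unit ball around the origin. -/
def eOHold (lam : ℝ) (g : Spc n → F) : ℝ≥0∞ :=
  (⨆ (x : Spc n) (_ : ‖x‖ ≤ 1), ENNReal.ofReal ‖g x‖) +
    ⨆ (x : Spc n) (y : Spc n) (_ : ‖x‖ ≤ 1 ∧ ‖y‖ ≤ 1 ∧ x ≠ y),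
      ENNReal.ofReal (‖g x - g y‖ / ‖x - y‖ ^ lam)

/-- The norm of `C^{0,λ,δ}`; for `λ = 0` this is just the weighted sup-norm. -/
def eHol0 (lam δ : ℝ) (g : Spc n → F) : ℝ≥0∞ :=
  if lam = 0 then eWSup δ g else eOHold lam g + eWSup δ g + eWHold lam δ g

/-- The norm of the base anisotropic space `C^{𝐬(0,λ,δ)}_T`. -/
def eAniso0 (T lam δ : ℝ) (v : ℝ → Spc n → F) : ℝ≥0∞ :=
  (⨆ t : Set.Icc (0 : ℝ) T, eHol0 lam δ (v t)) +
    if lam = 0 then 0 else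
      ⨆ (t₁ : Set.Icc (0 : ℝ) T) (t₂ : Set.Icc (0 : ℝ) T) (_ : (t₁ : ℝ) ≠ (t₂ : ℝ))
        (x : Spc n),
        ENNReal.ofReal (wt x ^ δ * ‖v t₁ x - v t₂ x‖ / |(t₁ : ℝ) - (t₂ : ℝ)| ^ (lam / 2))

end enorms

/-- The norm of the static weighted Hölder space `C^{s,λ,δ}`. -/
def eHolS (s : ℕ) (lam δ : ℝ) (g : Spc n → ℝ) : ℝ≥0∞ :=
  ∑ m ∈ Finset.range (s + 1), eHol0 lam (δ + m) (iteratedFDeriv ℝ m g)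

/-- Membership in the static weighted Hölder space `C^{s,λ,δ}`. -/
def HolSMem (s : ℕ) (lam δ : ℝ) (g : Spc n → ℝ) : Prop :=
  ContDiff ℝ s g ∧ eHolS s lam δ g ≠ ⊤

/-- Time derivative of order `j` (within `[0,T]`). -/
def tDeriv (T : ℝ) (j : ℕ) (u : ℝ → Spc n → ℝ) (t : ℝ) (x : Spc n) : ℝ :=
  iteratedDerivWithin j (fun τ => u τ x) (Set.Icc 0 T) t

/-- Mixed derivative `∂_x^m ∂_t^j`. -/
def mixDeriv (T : ℝ) (m j : ℕ) (u : ℝ → Spc n → ℝ) (t : ℝ) :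
    Spc n → ContinuousMultilinearMap ℝ (fun _ : Fin m => Spc n) ℝ :=
  iteratedFDeriv ℝ m (fun x => tDeriv T j u t x)

/-- The norm of the anisotropic weighted parabolic Hölder space `C^{k,𝐬(s,λ,δ)}_T`. -/
def eAnisoKS (T : ℝ) (k s : ℕ) (lam δ : ℝ) (u : ℝ → Spc n → ℝ) : ℝ≥0∞ :=
  ∑ b ∈ Finset.range (k + 1), ∑ m ∈ Finset.range (2 * s + 1), ∑ j ∈ Finset.range (s + 1),
    if m + 2 * j ≤ 2 * s then eAniso0 T lam (δ + b + m) (mixDeriv T (b + m) j u) else 0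

/-- Regularity required of members of `C^{k,𝐬(s,λ,δ)}_T`. -/
def AnisoReg (T : ℝ) (k s : ℕ) (u : ℝ → Spc n → ℝ) : Prop :=
  (∀ x : Spc n, ContDiffOn ℝ s (fun t => u t x) (Set.Icc 0 T)) ∧
  (∀ j : ℕ, j ≤ s → ∀ t ∈ Set.Icc (0 : ℝ) T,
    ContDiff ℝ (2 * (s - j) + k) (fun x => tDeriv T j u t x)) ∧
  (∀ j m : ℕ, j ≤ s → m + 2 * j ≤ 2 * s + k →
    Continuous fun p : Set.Icc (0 : ℝ) T × Spc n => mixDeriv T m j u p.1 p.2)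

/-- Membership in `C^{k,𝐬(s,λ,δ)}_T`. -/
def AnisoMem (T : ℝ) (k s : ℕ) (lam δ : ℝ) (u : ℝ → Spc n → ℝ) : Prop :=
  AnisoReg T k s u ∧ eAnisoKS T k s lam δ u ≠ ⊤

/-- The norm of `𝓕^{k,𝐬(s,λ,λ',δ)}_T = C^{k+1,𝐬(s,λ,δ)}_T ∩ C^{k,𝐬(s,λ',δ)}_T`. -/
def eFn (T : ℝ) (k s : ℕ) (lam lam' δ : ℝ) (u : ℝ → Spc n → ℝ) : ℝ≥0∞ :=
  eAnisoKS T (k + 1) s lam δ u + eAnisoKS T k s lam' δ u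

/-- Membership in `𝓕^{k,𝐬(s,λ,λ',δ)}_T`. -/
def FMem (T : ℝ) (k s : ℕ) (lam lam' δ : ℝ) (u : ℝ → Spc n → ℝ) : Prop :=
  AnisoReg T (k + 1) s u ∧ eFn T k s lam lam' δ u ≠ ⊤

/-- Index set of a basis of `Λ^q`. -/
abbrev Idx (n q : ℕ) := {I : Finset (Fin n) // I.card = q}

/-- Static differential `q`-forms: coefficient functions. -/
abbrev FormS (n q : ℕ) := Idx n q → Spc n → ℝ

/-- Time-dependent differential `q`-forms. -/
abbrev FormT (n q : ℕ) := Idx n q → ℝ → Spc n → ℝ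

/-- Fibre of the bundle `Λ^q`. -/
abbrev Fib (n q : ℕ) := Idx n q → ℝ

/-- The exterior derivative `d_q` on static `q`-forms. -/
def dS {q : ℕ} (u : FormS n q) : FormS n (q + 1) := fun J x =>
  ∑ i : Fin n,
    if h : i ∈ J.1 then
      (-1 : ℝ) ^ (J.1.filter fun j => j < i).card *
        pd i (u ⟨J.1.erase i, by simp [Finset.card_erase_of_mem h, J.2]⟩) x
    else 0

/-- The exterior derivative `d_{q-1}` mapping `(q-1)`-forms to `q`-forms. -/
def dLowS {q : ℕ} (p : FormS n (q - 1)) : FormS n q := fun J x =>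
  ∑ i : Fin n,
    if h : i ∈ J.1 ∧ (J.1.erase i).card = q - 1 then
      (-1 : ℝ) ^ (J.1.filter fun j => j < i).card * pd i (p ⟨J.1.erase i, h.2⟩) x
    else 0

/-- The formal adjoint `d_{q-1}^*` mapping `q`-forms to `(q-1)`-forms. -/
def coDS {q : ℕ} (u : FormS n q) : FormS n (q - 1) := fun K x =>
  -∑ i : Fin n,
    if h : i ∉ K.1 ∧ (insert i K.1).card = q then
      (-1 : ℝ) ^ (K.1.filter fun j => j < i).card * pd i (u ⟨insert i K.1, h.2⟩) x
    else 0

/-- `d_q` on time-dependent forms. -/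
def dT {q : ℕ} (u : FormT n q) : FormT n (q + 1) := fun J t => dS (fun I => u I t) J

/-- `d_{q-1}` on time-dependent forms. -/
def dLowT {q : ℕ} (p : FormT n (q - 1)) : FormT n q := fun J t => dLowS (fun I => p I t) J

/-- `d_{q-1}^*` on time-dependent forms. -/
def coDT {q : ℕ} (u : FormT n q) : FormT n (q - 1) := fun K t => coDS (fun I => u I t) K

/-- Norm of `C^{k,𝐬(s,λ,δ)}_{T,Λ^q}`. -/
def eAnisoKSF {q : ℕ} (T : ℝ) (k s : ℕ) (lam δ : ℝ) (u : FormT n q) : ℝ≥0∞ :=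
  ∑ I : Idx n q, eAnisoKS T k s lam δ (u I)

/-- Membership in `C^{k,𝐬(s,λ,δ)}_{T,Λ^q}`. -/
def CMemF {q : ℕ} (T : ℝ) (k s : ℕ) (lam δ : ℝ) (u : FormT n q) : Prop :=
  (∀ I, AnisoReg T k s (u I)) ∧ eAnisoKSF T k s lam δ u ≠ ⊤

/-- Graph norm of `C^{k,𝐬(s,λ,δ)}_{T,Λ^q,𝒟_{d⊕d*}}`. -/
def eCD {q : ℕ} (T : ℝ) (k s : ℕ) (lam δ : ℝ) (u : FormT n q) : ℝ≥0∞ :=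
  eAnisoKSF T k s lam δ u + eAnisoKSF T k s lam (δ + 1) (dT u) +
    eAnisoKSF T k s lam (δ + 1) (coDT u)

/-- Membership in `C^{k,𝐬(s,λ,δ)}_{T,Λ^q,𝒟_{d⊕d*}}`. -/
def CMemD {q : ℕ} (T : ℝ) (k s : ℕ) (lam δ : ℝ) (u : FormT n q) : Prop :=
  CMemF T k s lam δ u ∧ CMemF T k s lam (δ + 1) (dT u) ∧ CMemF T k s lam (δ + 1) (coDT u)

/-- Norm of `𝓕^{k,𝐬(s,λ,λ',δ)}_{T,Λ^q}`. -/
def eFF {q : ℕ} (T : ℝ) (k s : ℕ) (lam lam' δ : ℝ) (u : FormT n q) : ℝ≥0∞ :=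
  ∑ I : Idx n q, eFn T k s lam lam' δ (u I)

/-- Membership in `𝓕^{k,𝐬(s,λ,λ',δ)}_{T,Λ^q}`. -/
def FMemF {q : ℕ} (T : ℝ) (k s : ℕ) (lam lam' δ : ℝ) (u : FormT n q) : Prop :=
  (∀ I, AnisoReg T (k + 1) s (u I)) ∧ eFF T k s lam lam' δ u ≠ ⊤

/-- Graph norm of `𝓕^{k,𝐬(s,λ,λ',δ)}_{T,Λ^q,𝒟_{d⊕d*}}`. -/
def eFD {q : ℕ} (T : ℝ) (k s : ℕ) (lam lam' δ : ℝ) (u : FormT n q) : ℝ≥0∞ :=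
  eFF T k s lam lam' δ u + eFF T k s lam lam' (δ + 1) (dT u) +
    eFF T k s lam lam' (δ + 1) (coDT u)

/-- Membership in `𝓕^{k,𝐬(s,λ,λ',δ)}_{T,Λ^q,𝒟_{d⊕d*}}`. -/
def FMemD {q : ℕ} (T : ℝ) (k s : ℕ) (lam lam' δ : ℝ) (u : FormT n q) : Prop :=
  FMemF T k s lam lam' δ u ∧ FMemF T k s lam lam' (δ + 1) (dT u) ∧
    FMemF T k s lam lam' (δ + 1) (coDT u)

/-- Norm of the static space `C^{s,λ,δ}_{Λ^q}`. -/
def eHolSF {q : ℕ} (s : ℕ) (lam δ : ℝ) (g : FormS n q) : ℝ≥0∞ :=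
  ∑ I : Idx n q, eHolS s lam δ (g I)

/-- Membership in the static space `C^{s,λ,δ}_{Λ^q}`. -/
def HolMemF {q : ℕ} (s : ℕ) (lam δ : ℝ) (g : FormS n q) : Prop :=
  (∀ I, ContDiff ℝ s (g I)) ∧ eHolSF s lam δ g ≠ ⊤

/-- Equality of time-dependent forms on `ℝⁿ × [0,T]`. -/
def EqOnT {q : ℕ} (T : ℝ) (u v : FormT n q) : Prop :=
  ∀ I, ∀ t ∈ Set.Icc (0 : ℝ) T, ∀ x, u I t x = v I t x

/-- The form `u` is co-closed (`d^* u = 0`) on `ℝⁿ × [0,T]`. -/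
def CoClosed {q : ℕ} (T : ℝ) (u : FormT n q) : Prop :=
  ∀ K, ∀ t ∈ Set.Icc (0 : ℝ) T, ∀ x, coDT u K t x = 0

/-- Type of the bilinear zero order operator `M₁^{(q)}`. -/
abbrev M1Type (n q : ℕ) := (Fib n (q + 1) × Fib n (q - 1)) →ₗ[ℝ] Fib n q →ₗ[ℝ] Fib n q

/-- Type of the bilinear zero order operator `M₂^{(q)}`. -/
abbrev M2Type (n q : ℕ) := Fib n q →ₗ[ℝ] Fib n q →ₗ[ℝ] Fib n (q - 1)

/-- Value of a time-dependent form at a point, as an element of the fibre. -/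
def fib {q : ℕ} (u : FormT n q) (t : ℝ) (x : Spc n) : Fib n q := fun I => u I t x

/-- Value of `(d_q ⊕ d_{q-1}^*) u` at a point. -/
def ddFib {q : ℕ} (u : FormT n q) (t : ℝ) (x : Spc n) : Fib n (q + 1) × Fib n (q - 1) :=
  (fun J => dT u J t x, fun K => coDT u K t x)

/-- The operator `W_q u = M₁((d⊕d^*)u, w) + M₁((d⊕d^*)w, u)`. -/
def Wop {q : ℕ} (M₁ : M1Type n q) (w u : FormT n q) : FormT n q := fun I t x =>
  M₁ (ddFib u t x) (fib w t x) I + M₁ (ddFib w t x) (fib u t x) I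

/-- The symmetric bilinearization `B_q(w,u)` of the nonlinearity. -/
def Bop {q : ℕ} (M₁ : M1Type n q) (M₂ : M2Type n q) (w u : FormT n q) : FormT n q :=
  fun I t x =>
    Wop M₁ w u I t x +
      dLowT (fun K t' x' =>
        M₂ (fib u t' x') (fib w t' x') K + M₂ (fib w t' x') (fib u t' x') K) I t x

/-- The nonlinearity `𝒩_q u = M₁((d⊕d^*)u, u) + d_{q-1} M₂(u,u)`. -/
def Nop {q : ℕ} (M₁ : M1Type n q) (M₂ : M2Type n q) (u : FormT n q) : FormT n q :=
  fun I t x =>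
    M₁ (ddFib u t x) (fib u t x) I +
      dLowT (fun K t' x' => M₂ (fib u t' x') (fib u t' x') K) I t x

/-- Fundamental solution of the heat operator `∂_t - μΔ`. -/
def heatKer (μ : ℝ) (x : Spc n) (t : ℝ) : ℝ :=
  if 0 < t then (4 * Real.pi * μ * t) ^ (-(n : ℝ) / 2) * Real.exp (-‖x‖ ^ 2 / (4 * μ * t))
  else 0

/-- Volume heat potential `Ψ_μ`. -/
def volPot (μ : ℝ) (f : ℝ → Spc n → ℝ) (t : ℝ) (x : Spc n) : ℝ :=
  ∫ τ in Set.Ioc (0 : ℝ) t, ∫ y : Spc n, heatKer μ (x - y) (t - τ) * f τ y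

/-- Poisson heat potential `Ψ_{μ,0}`. -/
def poisPot (μ : ℝ) (g : Spc n → ℝ) (t : ℝ) (x : Spc n) : ℝ :=
  ∫ y : Spc n, heatKer μ (x - y) t * g y

/-- Volume heat potential acting coefficient-wise on forms. -/
def volPotF {q : ℕ} (μ : ℝ) (f : FormT n q) : FormT n q := fun I => volPot μ (f I)

/-- Poisson heat potential acting coefficient-wise on forms. -/
def poisPotF {q : ℕ} (μ : ℝ) (g : FormS n q) : FormT n q := fun I => poisPot μ (g I)

/-- Area of the unit sphere in `ℝⁿ`. -/
def sphArea (n : ℕ) : ℝ := 2 * Real.pi ^ ((n : ℝ) / 2) / Real.Gamma ((n : ℝ) / 2)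

/-- Standard fundamental solution of the Laplace operator in `ℝⁿ`. -/
def lapKer (n : ℕ) (x : Spc n) : ℝ :=
  if n = 2 then (1 / Real.pi) * Real.log ‖x‖
  else ‖x‖ ^ (2 - (n : ℝ)) / (sphArea n * (2 - (n : ℝ)))

/-- Newtonian potential. -/
def newtPot (f : Spc n → ℝ) (x : Spc n) : ℝ := ∫ y : Spc n, lapKer n (x - y) * f y

/-- The integral operator `Φ_q` mapping `(q+1)`-forms to `q`-forms;
concretely `Φ_q f = -d^* (e * f)`. -/
def PhiOp {q : ℕ} (f : FormT n (q + 1)) : FormT n q := fun K t x =>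
  -coDS (n := n) (q := q + 1) (fun J y => newtPot (fun z => f J t z) y) K x

/-- Squared `L²` norm of a form at time `t`. -/
def l2Sq {q : ℕ} (u : FormT n q) (t : ℝ) : ℝ :=
  ∑ I : Idx n q, ∫ x : Spc n, (u I t x) ^ 2

/-- Squared `L²` norm of the spatial gradient of a form at time `t`. -/
def gradSq {q : ℕ} (u : FormT n q) (t : ℝ) : ℝ :=
  ∑ I : Idx n q, ∑ i : Fin n, ∫ x : Spc n, (pd i (fun y => u I t y) x) ^ 2

/-- The norm of `C^{0,𝐬(0,0,δ)}_{T,Λ^q}` (weighted sup-norm). -/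
def eSupT {q : ℕ} (T δ : ℝ) (u : FormT n q) : ℝ≥0∞ :=
  ∑ I : Idx n q,
    ⨆ (t : Set.Icc (0 : ℝ) T) (x : Spc n), ENNReal.ofReal (wt x ^ δ * |u I t x|)

/-- The norm `‖∇u‖_{C^{0,𝐬(0,0,δ)}_{T}}` of the spatial gradient. -/
def eSupGradT {q : ℕ} (T δ : ℝ) (u : FormT n q) : ℝ≥0∞ :=
  ∑ I : Idx n q, ∑ i : Fin n,
    ⨆ (t : Set.Icc (0 : ℝ) T) (x : Spc n),
      ENNReal.ofReal (wt x ^ δ * |pd i (fun y => u I t y) x|)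

/-- `q`-form with coefficients harmonic polynomials of degree at most `m`. -/
def HarmPolyForm {q : ℕ} (m : ℕ) (h : FormS n q) : Prop :=
  ∀ I, (∃ P : MvPolynomial (Fin n) ℝ, P.totalDegree ≤ m ∧
      ∀ x : Spc n, h I x = MvPolynomial.eval (fun i => x i) P) ∧
    ∀ x : Spc n, lap (h I) x = 0

/-- Classical solution of the Cauchy problem
`∂_t u - μ Δ u + extra = f` on `ℝⁿ × (0,T)`, `u(·,0) = u₀`. -/
def CauchySol {q : ℕ} (T μ : ℝ) (u extra f : FormT n q) (u₀ : FormS n q) : Prop :=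
  (∀ I, ∀ t ∈ Set.Ioo (0 : ℝ) T, ∀ x,
    deriv (fun τ => u I τ x) t - μ * lap (fun y => u I t y) x + extra I t x = f I t x) ∧
  ∀ I x, u I 0 x = u₀ I x

/-- `Ψ_{μ,q} 𝒩_q u`. -/
def NopPot {q : ℕ} (μ : ℝ) (M₁ : M1Type n q) (M₂ : M2Type n q) (u : FormT n q) : FormT n q :=
  volPotF μ (Nop M₁ M₂ u)

/-- `u + Ψ_{μ,q} 𝒩_q u`. -/
def TmapN {q : ℕ} (μ : ℝ) (M₁ : M1Type n q) (M₂ : M2Type n q) (u : FormT n q) : FormT n q :=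
  u + NopPot μ M₁ M₂ u

/-- The linearization `u + Ψ_{μ,q} B_q(v,u)`. -/
def LmapB {q : ℕ} (μ : ℝ) (M₁ : M1Type n q) (M₂ : M2Type n q) (v u : FormT n q) :
    FormT n q :=
  u + volPotF μ (Bop M₁ M₂ v u)

/-- `Φ_q d_q Ψ_{μ,q} 𝒩_q u`. -/
def PhiNpot {q : ℕ} (μ : ℝ) (M₁ : M1Type n q) (M₂ : M2Type n q) (u : FormT n q) :
    FormT n q :=
  PhiOp (dT (volPotF μ (Nop M₁ M₂ u)))

/-- `u + Φ_q d_q Ψ_{μ,q} 𝒩_q u`. -/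
def PhiNmap {q : ℕ} (μ : ℝ) (M₁ : M1Type n q) (M₂ : M2Type n q) (u : FormT n q) :
    FormT n q :=
  u + PhiNpot μ M₁ M₂ u

/-- The linearization `u + Φ_q d_q Ψ_{μ,q} B_q(v,u)`. -/
def PhiLmap {q : ℕ} (μ : ℝ) (M₁ : M1Type n q) (M₂ : M2Type n q) (v u : FormT n q) :
    FormT n q :=
  u + PhiOp (dT (volPotF μ (Bop M₁ M₂ v u)))


/-! ### Auxiliary: coordinate control of multilinear maps -/

lemma euclid_coord_le_norm (x : Spc n) (i : Fin n) : |x i| ≤ ‖x‖ := by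
  rw [EuclideanSpace.norm_eq]
  rw [show |x i| = Real.sqrt ((x i) ^ 2) from (Real.sqrt_sq_eq_abs _).symm]
  apply Real.sqrt_le_sqrt
  rw [show (x i) ^ 2 = ‖x i‖ ^ 2 by rw [Real.norm_eq_abs, sq_abs]]
  exact Finset.single_le_sum (f := fun j => ‖x j‖ ^ 2) (fun j _ => by positivity)
    (Finset.mem_univ i)

lemma euclid_eq_sum_single (x : Spc n) :
    x = ∑ j : Fin n, x j • EuclideanSpace.single j (1 : ℝ) := by
  ext j
  rw [WithLp.ofLp_sum, Finset.sum_apply]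
  simp [EuclideanSpace.single_apply]

lemma cmm_apply_eq_sum {m : ℕ} (A : ContinuousMultilinearMap ℝ (fun _ : Fin m => Spc n) ℝ)
    (v : Fin m → Spc n) :
    A v = ∑ σ : Fin m → Fin n,
      (∏ i, v i (σ i)) * A (fun i => EuclideanSpace.single (σ i) 1) := by
  have h1 : A v = A fun i => ∑ j ∈ Finset.univ, v i j • EuclideanSpace.single j (1 : ℝ) := by
    congr 1; funext i; exact euclid_eq_sum_single (v i)
  rw [h1, A.map_sum_finset (A := fun _ => Finset.univ)]
  rw [Fintype.piFinset_univ]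
  refine Finset.sum_congr rfl fun σ _ => ?_
  rw [A.map_smul_univ]
  simp [smul_eq_mul]

lemma cmm_norm_le {m : ℕ} (A : ContinuousMultilinearMap ℝ (fun _ : Fin m => Spc n) ℝ) :
    ‖A‖ ≤ ∑ σ : Fin m → Fin n, |A fun i => EuclideanSpace.single (σ i) 1| := by
  refine A.opNorm_le_bound (Finset.sum_nonneg fun (σ : Fin m → Fin n) _ =>
      abs_nonneg (A fun i => EuclideanSpace.single (σ i) 1)) fun v => ?_
  rw [show (A v : ℝ) = A v from rfl, cmm_apply_eq_sum]
  refine (norm_sum_le _ _).trans ?_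
  rw [Finset.sum_mul]
  refine Finset.sum_le_sum fun σ _ => ?_
  rw [norm_mul, Real.norm_eq_abs, Real.norm_eq_abs, mul_comm]
  have h2 : |∏ i, v i (σ i)| ≤ ∏ i, ‖v i‖ := by
    rw [Finset.abs_prod]
    exact Finset.prod_le_prod (fun i _ => abs_nonneg _) fun i _ => euclid_coord_le_norm _ _
  exact mul_le_mul_of_nonneg_left h2 (abs_nonneg _)

lemma cmm_apply_basis_le {m : ℕ} (A : ContinuousMultilinearMap ℝ (fun _ : Fin m => Spc n) ℝ)
    (σ : Fin m → Fin n) : |A fun i => EuclideanSpace.single (σ i) 1| ≤ ‖A‖ := by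
  have h := A.le_opNorm fun i => EuclideanSpace.single (σ i) (1 : ℝ)
  simpa [EuclideanSpace.norm_single] using h


/-! ### Auxiliary: iterated coordinate partial derivatives -/

/-- Iterated coordinate partial derivative along a tuple of directions. -/
def pdF : (m : ℕ) → (Fin m → Fin n) → (Spc n → ℝ) → Spc n → ℝ
  | 0, _, h => h
  | m + 1, σ, h => pd (σ 0) (pdF m (σ ∘ Fin.succ) h)

lemma pdF_cons {m : ℕ} (i : Fin n) (σ : Fin m → Fin n) (h : Spc n → ℝ) :
    pdF (m + 1) (Fin.cons i σ) h = pd i (pdF m σ h) := by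
  have h0 : pdF (m + 1) (Fin.cons i σ) h
      = pd ((Fin.cons i σ : Fin (m + 1) → Fin n) 0)
        (pdF m ((Fin.cons i σ : Fin (m + 1) → Fin n) ∘ Fin.succ) h) := rfl
  rw [h0, show ((Fin.cons i σ : Fin (m + 1) → Fin n) ∘ Fin.succ) = σ from
    funext fun j => by simp [Function.comp], Fin.cons_zero]

lemma iteratedFDeriv_apply_basis : ∀ (m : ℕ) (σ : Fin m → Fin n) (h : Spc n → ℝ),
    ContDiff ℝ m h → ∀ x,
    iteratedFDeriv ℝ m h x (fun i => EuclideanSpace.single (σ i) 1) = pdF m σ h x := by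
  intro m
  induction m with
  | zero => intro σ h _ x; simp [pdF]
  | succ m ih =>
    intro σ h hh x
    have hd : DifferentiableAt ℝ (iteratedFDeriv ℝ m h) x := by
      refine (hh.differentiable_iteratedFDeriv ?_ x)
      exact_mod_cast Nat.lt_succ_self m
    rw [iteratedFDeriv_succ_apply_left,
      ← fderiv_continuousMultilinear_apply_const_apply hd _ _]
    have hfun : (fun y => iteratedFDeriv ℝ m h y
          (Fin.tail fun i : Fin (m + 1) => EuclideanSpace.single (σ i) (1 : ℝ)))
        = pdF m (σ ∘ Fin.succ) h := by
      funext y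
      exact ih (σ ∘ Fin.succ) h (hh.of_le (by exact_mod_cast Nat.le_succ m)) y
    rw [hfun]
    rfl

lemma pdF_differentiable {N m : ℕ} (hm : m < N) (σ : Fin m → Fin n) {h : Spc n → ℝ}
    (hh : ContDiff ℝ N h) : Differentiable ℝ (pdF m σ h) := by
  have heq : pdF m σ h
      = fun y => iteratedFDeriv ℝ m h y fun i => EuclideanSpace.single (σ i) 1 :=
    (funext fun y => iteratedFDeriv_apply_basis m σ h
      (hh.of_le (by exact_mod_cast hm.le)) y).symm
  rw [heq]
  have hdiff : Differentiable ℝ (iteratedFDeriv ℝ m h) :=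
    hh.differentiable_iteratedFDeriv (by exact_mod_cast hm)
  exact fun x => (hdiff x).continuousMultilinear_apply_const _

lemma pdF_sum {ι : Type*} (s : Finset ι) : ∀ (m : ℕ) (σ : Fin m → Fin n) (h : ι → Spc n → ℝ),
    (∀ r ∈ s, ContDiff ℝ m (h r)) → ∀ x,
    pdF m σ (fun y => ∑ r ∈ s, h r y) x = ∑ r ∈ s, pdF m σ (h r) x := by
  intro m
  induction m with
  | zero => intro σ h _ x; rfl
  | succ m ih =>
    intro σ h hh x
    show pd (σ 0) (pdF m (σ ∘ Fin.succ) fun y => ∑ r ∈ s, h r y) x = _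
    have h1 : pdF m (σ ∘ Fin.succ) (fun y => ∑ r ∈ s, h r y)
        = fun y => ∑ r ∈ s, pdF m (σ ∘ Fin.succ) (h r) y := by
      funext y
      exact ih (σ ∘ Fin.succ) h
        (fun r hr => (hh r hr).of_le (by exact_mod_cast Nat.le_succ m)) y
    rw [h1]
    show fderiv ℝ (fun y => ∑ r ∈ s, pdF m (σ ∘ Fin.succ) (h r) y) x
        (EuclideanSpace.single (σ 0) 1) = _
    rw [fderiv_fun_sum fun r hr => pdF_differentiable (Nat.lt_succ_self m) _ (hh r hr) x]
    rw [ContinuousLinearMap.sum_apply]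
    exact Finset.sum_congr rfl fun r _ => rfl

/-- Leibniz rule for iterated coordinate partial derivatives, existential form. -/
lemma pdF_leibniz : ∀ (m : ℕ) (σ : Fin m → Fin n),
    ∃ (ι : Type) (_ : Fintype ι) (F G : ι → Σ a : ℕ, Fin a → Fin n),
      (∀ r, (F r).1 + (G r).1 = m) ∧
      ∀ f g : Spc n → ℝ, ContDiff ℝ m f → ContDiff ℝ m g → ∀ x,
        pdF m σ (fun y => f y * g y) x =
          ∑ r, pdF (F r).1 (F r).2 f x * pdF (G r).1 (G r).2 g x := by
  intro m
  induction m with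
  | zero =>
    intro σ
    exact ⟨PUnit, inferInstance, fun _ => ⟨0, Fin.elim0⟩, fun _ => ⟨0, Fin.elim0⟩,
      fun _ => rfl, fun f g _ _ x => by simp [pdF]⟩
  | succ m ih =>
    intro σ
    obtain ⟨ι, _, F, G, hFG, hid⟩ := ih (σ ∘ Fin.succ)
    refine ⟨ι ⊕ ι, inferInstance,
      Sum.elim (fun r => ⟨(F r).1 + 1, Fin.cons (σ 0) (F r).2⟩) F,
      Sum.elim G (fun r => ⟨(G r).1 + 1, Fin.cons (σ 0) (G r).2⟩),
      fun p => by cases p with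
        | inl r => simpa using by have := hFG r; omega
        | inr r => simpa using by have := hFG r; omega,
      fun f g hf hg x => ?_⟩
    have hf' := hf.of_le (show ((m : ℕ) : WithTop ℕ∞) ≤ (m + 1 : ℕ) by
      exact_mod_cast Nat.le_succ m)
    have hg' := hg.of_le (show ((m : ℕ) : WithTop ℕ∞) ≤ (m + 1 : ℕ) by
      exact_mod_cast Nat.le_succ m)
    have h1 : pdF m (σ ∘ Fin.succ) (fun y => f y * g y)
        = fun y => ∑ r, pdF (F r).1 (F r).2 f y * pdF (G r).1 (G r).2 g y :=
      funext fun y => hid f g hf' hg' y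
    have hdF : ∀ r : ι, Differentiable ℝ (pdF (F r).1 (F r).2 f) := fun r =>
      pdF_differentiable (by have := hFG r; omega) _ hf
    have hdG : ∀ r : ι, Differentiable ℝ (pdF (G r).1 (G r).2 g) := fun r =>
      pdF_differentiable (by have := hFG r; omega) _ hg
    show pd (σ 0) (pdF m (σ ∘ Fin.succ) fun y => f y * g y) x = _
    rw [h1]
    show fderiv ℝ (fun y => ∑ r, pdF (F r).1 (F r).2 f y * pdF (G r).1 (G r).2 g y) x
        (EuclideanSpace.single (σ 0) 1) = _
    rw [fderiv_fun_sum (A := fun r y => pdF (F r).1 (F r).2 f y * pdF (G r).1 (G r).2 g y)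
      fun r _ => ((hdF r) x).mul ((hdG r) x), ContinuousLinearMap.sum_apply,
      Fintype.sum_sum_type]
    simp only [Sum.elim_inl, Sum.elim_inr]
    rw [← Finset.sum_add_distrib]
    refine Finset.sum_congr rfl fun r _ => ?_
    rw [fderiv_fun_mul ((hdF r) x) ((hdG r) x)]
    simp only [ContinuousLinearMap.add_apply, ContinuousLinearMap.smul_apply, smul_eq_mul]
    rw [pdF_cons, pdF_cons]
    show pdF (F r).1 (F r).2 f x * pd (σ 0) (pdF (G r).1 (G r).2 g) x
        + pdF (G r).1 (G r).2 g x * pd (σ 0) (pdF (F r).1 (F r).2 f) x = _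
    ring



/-- Leibniz rule for iterated one-dimensional derivatives on `[0,T]`, existential form. -/
lemma iteratedDerivWithin_leibniz (T : ℝ) (hT : 0 < T) : ∀ j : ℕ,
    ∃ (ι : Type) (_ : Fintype ι) (a b : ι → ℕ),
      (∀ r, a r + b r = j) ∧
      ∀ φ ψ : ℝ → ℝ, ContDiffOn ℝ j φ (Set.Icc 0 T) → ContDiffOn ℝ j ψ (Set.Icc 0 T) →
      ∀ t ∈ Set.Icc (0 : ℝ) T,
        iteratedDerivWithin j (fun τ => φ τ * ψ τ) (Set.Icc 0 T) t
          = ∑ r, iteratedDerivWithin (a r) φ (Set.Icc 0 T) t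
              * iteratedDerivWithin (b r) ψ (Set.Icc 0 T) t := by
  intro j
  induction j with
  | zero =>
    exact ⟨PUnit, inferInstance, fun _ => 0, fun _ => 0, fun _ => rfl,
      fun φ ψ _ _ t _ => by simp⟩
  | succ j ih =>
    obtain ⟨ι, _, a, b, hab, hid⟩ := ih
    refine ⟨ι ⊕ ι, inferInstance, Sum.elim (fun r => a r + 1) a, Sum.elim b (fun r => b r + 1),
      fun p => by cases p with
        | inl r => simpa using by have := hab r; omega
        | inr r => simpa using by have := hab r; omega,
      fun φ ψ hφ hψ t ht => ?_⟩
    have hUD := uniqueDiffOn_Icc hT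
    have hle : ((j : ℕ) : WithTop ℕ∞) ≤ ((j + 1 : ℕ) : WithTop ℕ∞) := by
      exact_mod_cast Nat.le_succ j
    have hφ' := hφ.of_le hle
    have hψ' := hψ.of_le hle
    have hdA : ∀ r, ∀ τ ∈ Set.Icc (0 : ℝ) T,
        DifferentiableWithinAt ℝ (iteratedDerivWithin (a r) φ (Set.Icc 0 T)) (Set.Icc 0 T) τ :=
      fun r τ hτ => hφ.differentiableOn_iteratedDerivWithin
        (by exact_mod_cast (by have := hab r; omega : a r < j + 1)) hUD τ hτ
    have hdB : ∀ r, ∀ τ ∈ Set.Icc (0 : ℝ) T,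
        DifferentiableWithinAt ℝ (iteratedDerivWithin (b r) ψ (Set.Icc 0 T)) (Set.Icc 0 T) τ :=
      fun r τ hτ => hψ.differentiableOn_iteratedDerivWithin
        (by exact_mod_cast (by have := hab r; omega : b r < j + 1)) hUD τ hτ
    rw [iteratedDerivWithin_succ]
    have hEq : Set.EqOn (iteratedDerivWithin j (fun τ => φ τ * ψ τ) (Set.Icc 0 T))
        (fun τ => ∑ r, iteratedDerivWithin (a r) φ (Set.Icc 0 T) τ
          * iteratedDerivWithin (b r) ψ (Set.Icc 0 T) τ) (Set.Icc 0 T) :=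
      fun τ hτ => hid φ ψ hφ' hψ' τ hτ
    rw [derivWithin_congr hEq (hEq ht)]
    rw [derivWithin_fun_sum (A := fun r τ => iteratedDerivWithin (a r) φ (Set.Icc 0 T) τ
      * iteratedDerivWithin (b r) ψ (Set.Icc 0 T) τ) fun r _ => ((hdA r t ht).mul (hdB r t ht))]
    rw [Fintype.sum_sum_type]
    simp only [Sum.elim_inl, Sum.elim_inr]
    rw [← Finset.sum_add_distrib]
    refine Finset.sum_congr rfl fun r _ => ?_
    rw [derivWithin_fun_mul (hdA r t ht) (hdB r t ht),
      ← iteratedDerivWithin_succ, ← iteratedDerivWithin_succ]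


lemma natCast_le_withTop {p q : ℕ} (h : p ≤ q) : ((p : ℕ) : WithTop ℕ∞) ≤ ((q : ℕ) : WithTop ℕ∞) := by
  exact_mod_cast h

/-! ### Auxiliary: Leibniz rule for mixed derivatives of a product -/

/-- Smoothness of spatial slices of `tDeriv` of a product. -/
lemma slice_eq_sum {T : ℝ} (hT : 0 < T) {k s : ℕ} {j : ℕ} (hj : j ≤ s) :
    ∃ (ι : Type) (_ : Fintype ι) (a b : ι → ℕ),
      (∀ r, a r + b r = j) ∧
      ∀ u v : ℝ → Spc n → ℝ,
        (∀ x : Spc n, ContDiffOn ℝ s (fun t => u t x) (Set.Icc 0 T)) →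
        (∀ x : Spc n, ContDiffOn ℝ s (fun t => v t x) (Set.Icc 0 T)) →
        ∀ t ∈ Set.Icc (0 : ℝ) T,
          (fun y => tDeriv T j (u * v) t y)
            = fun y => ∑ r, tDeriv T (a r) u t y * tDeriv T (b r) v t y := by
  obtain ⟨ι, hfin, a, b, hab, hid⟩ := iteratedDerivWithin_leibniz T hT j
  refine ⟨ι, hfin, a, b, hab, fun u v hu hv t ht => funext fun y => ?_⟩
  have hjle : ((j : ℕ) : WithTop ℕ∞) ≤ ((s : ℕ) : WithTop ℕ∞) := by exact_mod_cast hj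
  have h := hid (fun τ => u τ y) (fun τ => v τ y) ((hu y).of_le hjle) ((hv y).of_le hjle) t ht
  exact h

lemma slice_contDiff {T : ℝ} (hT : 0 < T) {k s : ℕ} {j N : ℕ} (hj : j ≤ s)
    (hN : N + 2 * j ≤ 2 * s + k) {u v : ℝ → Spc n → ℝ}
    (hu : AnisoReg T k s u) (hv : AnisoReg T k s v) {t : ℝ} (ht : t ∈ Set.Icc (0 : ℝ) T) :
    ContDiff ℝ N fun y => tDeriv T j (u * v) t y := by
  obtain ⟨ι, _, a, b, hab, hid⟩ := slice_eq_sum (k := k) hT hj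
  rw [hid u v hu.1 hv.1 t ht]
  refine ContDiff.sum fun r _ => ContDiff.mul ?_ ?_
  · exact (hu.2.1 (a r) (by have := hab r; omega) t ht).of_le
      (natCast_le_withTop (by have := hab r; omega : N ≤ 2 * (s - a r) + k))
  · exact (hv.2.1 (b r) (by have := hab r; omega) t ht).of_le
      (natCast_le_withTop (by have := hab r; omega : N ≤ 2 * (s - b r) + k))

/-- Master Leibniz identity for mixed derivatives of a product, coordinate form. -/
lemma mix_leibniz {T : ℝ} (hT : 0 < T) {k s : ℕ} {M j : ℕ} (hj : j ≤ s)
    (hM : M + 2 * j ≤ 2 * s + k) (σ : Fin M → Fin n) :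
    ∃ (ι : Type) (_ : Fintype ι) (au av iu iv : ι → ℕ)
      (τu : (ρ : ι) → Fin (au ρ) → Fin n) (τv : (ρ : ι) → Fin (av ρ) → Fin n),
      (∀ ρ, au ρ + av ρ = M ∧ iu ρ + iv ρ = j) ∧
      ∀ u v : ℝ → Spc n → ℝ, AnisoReg T k s u → AnisoReg T k s v →
      ∀ t ∈ Set.Icc (0 : ℝ) T, ∀ x,
        pdF M σ (fun y => tDeriv T j (u * v) t y) x
          = ∑ ρ, pdF (au ρ) (τu ρ) (fun y => tDeriv T (iu ρ) u t y) x
              * pdF (av ρ) (τv ρ) (fun y => tDeriv T (iv ρ) v t y) x := by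
  obtain ⟨ι₁, _, a, b, hab, hid₁⟩ := slice_eq_sum (k := k) hT hj
  obtain ⟨ι₂, _, F, G, hFG, hid₂⟩ := pdF_leibniz M σ
  refine ⟨ι₁ × ι₂, inferInstance, fun ρ => (F ρ.2).1, fun ρ => (G ρ.2).1,
    fun ρ => a ρ.1, fun ρ => b ρ.1, fun ρ => (F ρ.2).2, fun ρ => (G ρ.2).2,
    fun ρ => ⟨hFG ρ.2, hab ρ.1⟩, fun u v hu hv t ht x => ?_⟩
  have hCDu : ∀ r : ι₁, ContDiff ℝ M fun y => tDeriv T (a r) u t y := fun r =>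
    (hu.2.1 (a r) (by have := hab r; omega) t ht).of_le
      (natCast_le_withTop (by have := hab r; omega : M ≤ 2 * (s - a r) + k))
  have hCDv : ∀ r : ι₁, ContDiff ℝ M fun y => tDeriv T (b r) v t y := fun r =>
    (hv.2.1 (b r) (by have := hab r; omega) t ht).of_le
      (natCast_le_withTop (by have := hab r; omega : M ≤ 2 * (s - b r) + k))
  rw [hid₁ u v hu.1 hv.1 t ht]
  rw [pdF_sum Finset.univ M σ _ (fun r _ => (hCDu r).mul (hCDv r)) x]
  rw [Fintype.sum_prod_type]
  exact Finset.sum_congr rfl fun r _ => hid₂ _ _ (hCDu r) (hCDv r) x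


lemma abs_mul_sub' (p p' q q' : ℝ) : |p * q - p' * q'| ≤ |p - p'| * |q| + |p'| * |q - q'| := by
  have h : p * q - p' * q' = (p - p') * q + p' * (q - q') := by ring
  rw [h]
  exact (abs_add_le _ _).trans (by rw [abs_mul, abs_mul])

lemma mix_prod_bound {T : ℝ} (hT : 0 < T) {k s M j : ℕ} (hj : j ≤ s)
    (hM : M + 2 * j ≤ 2 * s + k) :
    ∃ (ι : Type) (_ : Fintype ι) (au av iu iv : ι → ℕ),
      (∀ ρ, au ρ + av ρ = M ∧ iu ρ + iv ρ = j) ∧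
      ∀ u v : ℝ → Spc n → ℝ, AnisoReg T k s u → AnisoReg T k s v →
      ∀ t ∈ Set.Icc (0 : ℝ) T, ∀ t' ∈ Set.Icc (0 : ℝ) T, ∀ x y : Spc n,
        (‖mixDeriv T M j (u * v) t x‖
            ≤ ∑ ρ, ‖mixDeriv T (au ρ) (iu ρ) u t x‖ * ‖mixDeriv T (av ρ) (iv ρ) v t x‖) ∧
        (‖mixDeriv T M j (u * v) t x - mixDeriv T M j (u * v) t y‖
            ≤ ∑ ρ, (‖mixDeriv T (au ρ) (iu ρ) u t x - mixDeriv T (au ρ) (iu ρ) u t y‖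
                * ‖mixDeriv T (av ρ) (iv ρ) v t x‖
              + ‖mixDeriv T (au ρ) (iu ρ) u t y‖
                * ‖mixDeriv T (av ρ) (iv ρ) v t x - mixDeriv T (av ρ) (iv ρ) v t y‖)) ∧
        (‖mixDeriv T M j (u * v) t x - mixDeriv T M j (u * v) t' x‖
            ≤ ∑ ρ, (‖mixDeriv T (au ρ) (iu ρ) u t x - mixDeriv T (au ρ) (iu ρ) u t' x‖
                * ‖mixDeriv T (av ρ) (iv ρ) v t x‖
              + ‖mixDeriv T (au ρ) (iu ρ) u t' x‖
                * ‖mixDeriv T (av ρ) (iv ρ) v t x - mixDeriv T (av ρ) (iv ρ) v t' x‖)) := by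
  choose ι hfin au av iu iv τu τv hsum hID using fun σ : Fin M → Fin n =>
    mix_leibniz (n := n) hT hj hM σ
  refine ⟨(Σ σ : Fin M → Fin n, ι σ), by letI := hfin; exact inferInstance,
    fun ρ => au ρ.1 ρ.2, fun ρ => av ρ.1 ρ.2, fun ρ => iu ρ.1 ρ.2, fun ρ => iv ρ.1 ρ.2,
    fun ρ => hsum ρ.1 ρ.2, ?_⟩
  intro u v hu hv t ht t' ht' x y
  have hsli : ∀ t'', t'' ∈ Set.Icc (0 : ℝ) T →
      ContDiff ℝ M fun z => tDeriv T j (u * v) t'' z :=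
    fun t'' ht'' => slice_contDiff hT hj hM hu hv ht''
  have hsliu : ∀ (σ : Fin M → Fin n) (ρ : ι σ) t'', t'' ∈ Set.Icc (0 : ℝ) T →
      ContDiff ℝ (au σ ρ) fun z => tDeriv T (iu σ ρ) u t'' z := by
    intro σ ρ t'' ht''
    have h1 := (hsum σ ρ).1
    have h2 := (hsum σ ρ).2
    exact (hu.2.1 (iu σ ρ) (by omega) t'' ht'').of_le
      (natCast_le_withTop (by omega : au σ ρ ≤ 2 * (s - iu σ ρ) + k))
  have hsliv : ∀ (σ : Fin M → Fin n) (ρ : ι σ) t'', t'' ∈ Set.Icc (0 : ℝ) T →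
      ContDiff ℝ (av σ ρ) fun z => tDeriv T (iv σ ρ) v t'' z := by
    intro σ ρ t'' ht''
    have h1 := (hsum σ ρ).1
    have h2 := (hsum σ ρ).2
    exact (hv.2.1 (iv σ ρ) (by omega) t'' ht'').of_le
      (natCast_le_withTop (by omega : av σ ρ ≤ 2 * (s - iv σ ρ) + k))
  -- applied values of the mixed derivative of the product
  have hval : ∀ (σ : Fin M → Fin n) (t'') (_ : t'' ∈ Set.Icc (0 : ℝ) T) (z : Spc n),
      mixDeriv T M j (u * v) t'' z (fun l => EuclideanSpace.single (σ l) 1)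
        = ∑ ρ : ι σ, pdF (au σ ρ) (τu σ ρ) (fun w => tDeriv T (iu σ ρ) u t'' w) z
            * pdF (av σ ρ) (τv σ ρ) (fun w => tDeriv T (iv σ ρ) v t'' w) z := by
    intro σ t'' ht'' z
    rw [show mixDeriv T M j (u * v) t'' z (fun l => EuclideanSpace.single (σ l) 1)
        = pdF M σ (fun w => tDeriv T j (u * v) t'' w) z from
      iteratedFDeriv_apply_basis M σ _ (hsli t'' ht'') z]
    exact hID σ u v hu hv t'' ht'' z
  have hpu : ∀ (σ : Fin M → Fin n) (ρ : ι σ) (t'') (_ : t'' ∈ Set.Icc (0 : ℝ) T) (z : Spc n),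
      pdF (au σ ρ) (τu σ ρ) (fun w => tDeriv T (iu σ ρ) u t'' w) z
        = mixDeriv T (au σ ρ) (iu σ ρ) u t'' z (fun l => EuclideanSpace.single (τu σ ρ l) 1) :=
    fun σ ρ t'' ht'' z =>
      (iteratedFDeriv_apply_basis _ _ _ (hsliu σ ρ t'' ht'') z).symm
  have hpv : ∀ (σ : Fin M → Fin n) (ρ : ι σ) (t'') (_ : t'' ∈ Set.Icc (0 : ℝ) T) (z : Spc n),
      pdF (av σ ρ) (τv σ ρ) (fun w => tDeriv T (iv σ ρ) v t'' w) z
        = mixDeriv T (av σ ρ) (iv σ ρ) v t'' z (fun l => EuclideanSpace.single (τv σ ρ l) 1) :=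
    fun σ ρ t'' ht'' z =>
      (iteratedFDeriv_apply_basis _ _ _ (hsliv σ ρ t'' ht'') z).symm
  have hbu : ∀ (σ : Fin M → Fin n) (ρ : ι σ) (t'') (_ : t'' ∈ Set.Icc (0 : ℝ) T) (z : Spc n),
      |pdF (au σ ρ) (τu σ ρ) (fun w => tDeriv T (iu σ ρ) u t'' w) z|
        ≤ ‖mixDeriv T (au σ ρ) (iu σ ρ) u t'' z‖ := by
    intro σ ρ t'' ht'' z
    rw [hpu σ ρ t'' ht'' z]
    exact cmm_apply_basis_le _ _
  have hbv : ∀ (σ : Fin M → Fin n) (ρ : ι σ) (t'') (_ : t'' ∈ Set.Icc (0 : ℝ) T) (z : Spc n),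
      |pdF (av σ ρ) (τv σ ρ) (fun w => tDeriv T (iv σ ρ) v t'' w) z|
        ≤ ‖mixDeriv T (av σ ρ) (iv σ ρ) v t'' z‖ := by
    intro σ ρ t'' ht'' z
    rw [hpv σ ρ t'' ht'' z]
    exact cmm_apply_basis_le _ _
  have hdu : ∀ (σ : Fin M → Fin n) (ρ : ι σ) (t₁) (_ : t₁ ∈ Set.Icc (0 : ℝ) T)
      (t₂) (_ : t₂ ∈ Set.Icc (0 : ℝ) T) (z w : Spc n),
      |pdF (au σ ρ) (τu σ ρ) (fun w' => tDeriv T (iu σ ρ) u t₁ w') z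
          - pdF (au σ ρ) (τu σ ρ) (fun w' => tDeriv T (iu σ ρ) u t₂ w') w|
        ≤ ‖mixDeriv T (au σ ρ) (iu σ ρ) u t₁ z - mixDeriv T (au σ ρ) (iu σ ρ) u t₂ w‖ := by
    intro σ ρ t₁ h₁ t₂ h₂ z w
    rw [hpu σ ρ t₁ h₁ z, hpu σ ρ t₂ h₂ w,
      show mixDeriv T (au σ ρ) (iu σ ρ) u t₁ z (fun l => EuclideanSpace.single (τu σ ρ l) 1)
          - mixDeriv T (au σ ρ) (iu σ ρ) u t₂ w (fun l => EuclideanSpace.single (τu σ ρ l) 1)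
        = (mixDeriv T (au σ ρ) (iu σ ρ) u t₁ z - mixDeriv T (au σ ρ) (iu σ ρ) u t₂ w)
            (fun l => EuclideanSpace.single (τu σ ρ l) 1) from
        (ContinuousMultilinearMap.sub_apply _ _ _).symm]
    exact cmm_apply_basis_le _ _
  have hdv : ∀ (σ : Fin M → Fin n) (ρ : ι σ) (t₁) (_ : t₁ ∈ Set.Icc (0 : ℝ) T)
      (t₂) (_ : t₂ ∈ Set.Icc (0 : ℝ) T) (z w : Spc n),
      |pdF (av σ ρ) (τv σ ρ) (fun w' => tDeriv T (iv σ ρ) v t₁ w') z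
          - pdF (av σ ρ) (τv σ ρ) (fun w' => tDeriv T (iv σ ρ) v t₂ w') w|
        ≤ ‖mixDeriv T (av σ ρ) (iv σ ρ) v t₁ z - mixDeriv T (av σ ρ) (iv σ ρ) v t₂ w‖ := by
    intro σ ρ t₁ h₁ t₂ h₂ z w
    rw [hpv σ ρ t₁ h₁ z, hpv σ ρ t₂ h₂ w,
      show mixDeriv T (av σ ρ) (iv σ ρ) v t₁ z (fun l => EuclideanSpace.single (τv σ ρ l) 1)
          - mixDeriv T (av σ ρ) (iv σ ρ) v t₂ w (fun l => EuclideanSpace.single (τv σ ρ l) 1)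
        = (mixDeriv T (av σ ρ) (iv σ ρ) v t₁ z - mixDeriv T (av σ ρ) (iv σ ρ) v t₂ w)
            (fun l => EuclideanSpace.single (τv σ ρ l) 1) from
        (ContinuousMultilinearMap.sub_apply _ _ _).symm]
    exact cmm_apply_basis_le _ _
  have key2 : ∀ (t₁) (h₁ : t₁ ∈ Set.Icc (0 : ℝ) T) (t₂) (h₂ : t₂ ∈ Set.Icc (0 : ℝ) T)
      (z w : Spc n),
      ‖mixDeriv T M j (u * v) t₁ z - mixDeriv T M j (u * v) t₂ w‖
        ≤ ∑ ρ : Σ σ : Fin M → Fin n, ι σ,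
            (‖mixDeriv T (au ρ.1 ρ.2) (iu ρ.1 ρ.2) u t₁ z
                - mixDeriv T (au ρ.1 ρ.2) (iu ρ.1 ρ.2) u t₂ w‖
              * ‖mixDeriv T (av ρ.1 ρ.2) (iv ρ.1 ρ.2) v t₁ z‖
            + ‖mixDeriv T (au ρ.1 ρ.2) (iu ρ.1 ρ.2) u t₂ w‖
              * ‖mixDeriv T (av ρ.1 ρ.2) (iv ρ.1 ρ.2) v t₁ z
                  - mixDeriv T (av ρ.1 ρ.2) (iv ρ.1 ρ.2) v t₂ w‖) := by
    intro t₁ h₁ t₂ h₂ z w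
    rw [← Finset.univ_sigma_univ, Finset.sum_sigma]
    refine (cmm_norm_le _).trans ?_
    refine Finset.sum_le_sum fun σ _ => ?_
    rw [ContinuousMultilinearMap.sub_apply, hval σ t₁ h₁ z, hval σ t₂ h₂ w,
      ← Finset.sum_sub_distrib]
    refine (Finset.abs_sum_le_sum_abs _ _).trans ?_
    refine Finset.sum_le_sum fun ρ _ => ?_
    refine (abs_mul_sub' _ _ _ _).trans ?_
    gcongr
    · exact hdu σ ρ t₁ h₁ t₂ h₂ z w
    · exact hbv σ ρ t₁ h₁ z
    · exact hbu σ ρ t₂ h₂ w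
    · exact hdv σ ρ t₁ h₁ t₂ h₂ z w
  refine ⟨?_, key2 t ht t ht x y, key2 t ht t' ht' x x⟩
  rw [← Finset.univ_sigma_univ, Finset.sum_sigma]
  refine (cmm_norm_le _).trans ?_
  refine Finset.sum_le_sum fun σ _ => ?_
  rw [hval σ t ht x]
  refine (Finset.abs_sum_le_sum_abs _ _).trans ?_
  refine Finset.sum_le_sum fun ρ _ => ?_
  rw [abs_mul]
  exact mul_le_mul (hbu σ ρ t ht x) (hbv σ ρ t ht x) (abs_nonneg _) (norm_nonneg _)


/-! ### Auxiliary: extracting pointwise bounds from the anisotropic norm -/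

lemma eAniso0_le_KS {T lam γ : ℝ} {k s : ℕ} (w : ℝ → Spc n → ℝ) {a i : ℕ} (hi : i ≤ s)
    (hai : a + 2 * i ≤ 2 * s + k) :
    eAniso0 T lam (γ + a) (mixDeriv T a i w) ≤ eAnisoKS T k s lam γ w := by
  obtain ⟨b', m', hb'k, hmj, hbm⟩ :
      ∃ b' m' : ℕ, b' ≤ k ∧ m' + 2 * i ≤ 2 * s ∧ b' + m' = a :=
    by refine ⟨a - min a (2 * s - 2 * i), min a (2 * s - 2 * i), ?_, ?_, ?_⟩ <;> omega
  subst hbm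
  have e1 : γ + ((b' + m' : ℕ) : ℝ) = γ + (b' : ℝ) + (m' : ℝ) := by push_cast; ring
  rw [e1]
  have h3 : eAniso0 T lam (γ + ↑b' + ↑m') (mixDeriv T (b' + m') i w)
      ≤ ∑ j' ∈ Finset.range (s + 1), if m' + 2 * j' ≤ 2 * s then
          eAniso0 T lam (γ + ↑b' + ↑m') (mixDeriv T (b' + m') j' w) else 0 := by
    refine le_trans (le_of_eq (if_pos hmj).symm) (Finset.single_le_sum
      (f := fun j' => if m' + 2 * j' ≤ 2 * s then
        eAniso0 T lam (γ + ↑b' + ↑m') (mixDeriv T (b' + m') j' w) else 0)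
      (fun _ _ => zero_le) (Finset.mem_range.2 (by omega : i < s + 1)))
  refine h3.trans ?_
  have h4 : (∑ j' ∈ Finset.range (s + 1), if m' + 2 * j' ≤ 2 * s then
        eAniso0 T lam (γ + ↑b' + ↑m') (mixDeriv T (b' + m') j' w) else 0)
      ≤ ∑ m'' ∈ Finset.range (2 * s + 1), ∑ j' ∈ Finset.range (s + 1),
          if m'' + 2 * j' ≤ 2 * s then
            eAniso0 T lam (γ + ↑b' + ↑m'') (mixDeriv T (b' + m'') j' w) else 0 :=
    Finset.single_le_sum
      (f := fun m'' => ∑ j' ∈ Finset.range (s + 1), if m'' + 2 * j' ≤ 2 * s then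
        eAniso0 T lam (γ + ↑b' + ↑m'') (mixDeriv T (b' + m'') j' w) else 0)
      (fun _ _ => zero_le) (Finset.mem_range.2 (by omega : m' < 2 * s + 1))
  refine h4.trans ?_
  exact Finset.single_le_sum
    (f := fun b'' : ℕ => ∑ m'' ∈ Finset.range (2 * s + 1), ∑ j' ∈ Finset.range (s + 1),
      if m'' + 2 * j' ≤ 2 * s then
        eAniso0 T lam (γ + (b'' : ℝ) + (m'' : ℝ)) (mixDeriv T (b'' + m'') j' w) else 0)
    (fun _ _ => zero_le) (Finset.mem_range.2 (by omega : b' < k + 1))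

section Extract

variable {F : Type*} [NormedAddCommGroup F]

lemma eWSup_le_eHol0 (lam δ : ℝ) (g : Spc n → F) : eWSup δ g ≤ eHol0 lam δ g := by
  rw [eHol0]
  split_ifs
  · exact le_rfl
  · exact le_trans (self_le_add_left _ _) (self_le_add_right _ _)

lemma eOHold_le_eHol0 {lam : ℝ} (hl : lam ≠ 0) (δ : ℝ) (g : Spc n → F) :
    eOHold lam g ≤ eHol0 lam δ g := by
  rw [eHol0, if_neg hl]
  exact le_trans (self_le_add_right _ _) (self_le_add_right _ _)

lemma eWHold_le_eHol0 {lam : ℝ} (hl : lam ≠ 0) (δ : ℝ) (g : Spc n → F) :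
    eWHold lam δ g ≤ eHol0 lam δ g := by
  rw [eHol0, if_neg hl]
  exact self_le_add_left _ _

lemma eHol0_le_eAniso0 {T lam δ : ℝ} (v : ℝ → Spc n → F) {t : ℝ}
    (ht : t ∈ Set.Icc (0 : ℝ) T) : eHol0 lam δ (v t) ≤ eAniso0 T lam δ v :=
  le_trans (le_iSup (fun t' : Set.Icc (0 : ℝ) T => eHol0 lam δ (v t')) ⟨t, ht⟩)
    (self_le_add_right _ _)

lemma tholder_le_eAniso0 {T lam δ : ℝ} (hl : lam ≠ 0) (v : ℝ → Spc n → F) {t₁ t₂ : ℝ}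
    (h₁ : t₁ ∈ Set.Icc (0 : ℝ) T) (h₂ : t₂ ∈ Set.Icc (0 : ℝ) T) (hne : t₁ ≠ t₂) (x : Spc n) :
    ENNReal.ofReal (wt x ^ δ * ‖v t₁ x - v t₂ x‖ / |t₁ - t₂| ^ (lam / 2))
      ≤ eAniso0 T lam δ v := by
  refine le_trans ?_ (self_le_add_left _ _)
  rw [if_neg hl]
  refine le_iSup_of_le ⟨t₁, h₁⟩ (le_iSup_of_le ⟨t₂, h₂⟩ ?_)
  refine le_iSup_of_le (by exact hne) (le_iSup_of_le x le_rfl)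

end Extract

/-- N1: weighted sup bound. -/
lemma nrm1 {T lam γ : ℝ} {k s : ℕ} (w : ℝ → Spc n → ℝ) {a i : ℕ} (hi : i ≤ s)
    (hai : a + 2 * i ≤ 2 * s + k) {t : ℝ} (ht : t ∈ Set.Icc (0 : ℝ) T) (x : Spc n) :
    ENNReal.ofReal (wt x ^ (γ + (a : ℝ)) * ‖mixDeriv T a i w t x‖)
      ≤ eAnisoKS T k s lam γ w := by
  refine le_trans ?_ (eAniso0_le_KS w hi hai)
  refine le_trans ?_ (eHol0_le_eAniso0 _ ht)
  refine le_trans ?_ (eWSup_le_eHol0 lam _ _)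
  exact le_iSup (fun x' => ENNReal.ofReal (wt x' ^ (γ + (a : ℝ)) * ‖mixDeriv T a i w t x'‖)) x

/-- N2: weighted Hölder quotient bound. -/
lemma nrm2 {T lam γ : ℝ} {k s : ℕ} (hl : lam ≠ 0) (w : ℝ → Spc n → ℝ) {a i : ℕ} (hi : i ≤ s)
    (hai : a + 2 * i ≤ 2 * s + k) {t : ℝ} (ht : t ∈ Set.Icc (0 : ℝ) T) {x y : Spc n}
    (hxy : x ≠ y ∧ ‖x - y‖ ≤ ‖x‖ / 2) :
    ENNReal.ofReal (wt2 x y ^ (γ + (a : ℝ) + lam)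
        * ‖mixDeriv T a i w t x - mixDeriv T a i w t y‖ / ‖x - y‖ ^ lam)
      ≤ eAnisoKS T k s lam γ w := by
  refine le_trans ?_ (eAniso0_le_KS w hi hai)
  refine le_trans ?_ (eHol0_le_eAniso0 _ ht)
  refine le_trans ?_ (eWHold_le_eHol0 hl _ _)
  exact le_iSup_of_le x (le_iSup_of_le y (le_iSup_of_le hxy le_rfl))

/-- N3a: local sup bound. -/
lemma nrm3a {T lam γ : ℝ} {k s : ℕ} (hl : lam ≠ 0) (w : ℝ → Spc n → ℝ) {a i : ℕ} (hi : i ≤ s)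
    (hai : a + 2 * i ≤ 2 * s + k) {t : ℝ} (ht : t ∈ Set.Icc (0 : ℝ) T) {x : Spc n}
    (hx : ‖x‖ ≤ 1) :
    ENNReal.ofReal ‖mixDeriv T a i w t x‖ ≤ eAnisoKS T k s lam γ w := by
  refine le_trans ?_ (eAniso0_le_KS (γ := γ) w hi hai)
  refine le_trans ?_ (eHol0_le_eAniso0 _ ht)
  refine le_trans ?_ (eOHold_le_eHol0 hl _ _)
  refine le_trans ?_ (self_le_add_right _ _)
  exact le_iSup_of_le x (le_iSup_of_le hx le_rfl)

/-- N3b: local Hölder quotient bound. -/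
lemma nrm3b {T lam γ : ℝ} {k s : ℕ} (hl : lam ≠ 0) (w : ℝ → Spc n → ℝ) {a i : ℕ} (hi : i ≤ s)
    (hai : a + 2 * i ≤ 2 * s + k) {t : ℝ} (ht : t ∈ Set.Icc (0 : ℝ) T) {x y : Spc n}
    (hxy : ‖x‖ ≤ 1 ∧ ‖y‖ ≤ 1 ∧ x ≠ y) :
    ENNReal.ofReal (‖mixDeriv T a i w t x - mixDeriv T a i w t y‖ / ‖x - y‖ ^ lam)
      ≤ eAnisoKS T k s lam γ w := by
  refine le_trans ?_ (eAniso0_le_KS (γ := γ) w hi hai)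
  refine le_trans ?_ (eHol0_le_eAniso0 _ ht)
  refine le_trans ?_ (eOHold_le_eHol0 hl _ _)
  refine le_trans ?_ (self_le_add_left _ _)
  exact le_iSup_of_le x (le_iSup_of_le y (le_iSup_of_le hxy le_rfl))

/-- N4: time Hölder quotient bound. -/
lemma nrm4 {T lam γ : ℝ} {k s : ℕ} (hl : lam ≠ 0) (w : ℝ → Spc n → ℝ) {a i : ℕ} (hi : i ≤ s)
    (hai : a + 2 * i ≤ 2 * s + k) {t₁ t₂ : ℝ} (h₁ : t₁ ∈ Set.Icc (0 : ℝ) T)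
    (h₂ : t₂ ∈ Set.Icc (0 : ℝ) T) (hne : t₁ ≠ t₂) (x : Spc n) :
    ENNReal.ofReal (wt x ^ (γ + (a : ℝ))
        * ‖mixDeriv T a i w t₁ x - mixDeriv T a i w t₂ x‖ / |t₁ - t₂| ^ (lam / 2))
      ≤ eAnisoKS T k s lam γ w := by
  refine le_trans ?_ (eAniso0_le_KS w hi hai)
  exact tholder_le_eAniso0 hl _ h₁ h₂ hne x


/-! ### Auxiliary: weight comparison -/

lemma wt_pos (x : Spc n) : 0 < wt x := Real.sqrt_pos.2 (by positivity)

lemma wt_sq (x : Spc n) : wt x ^ 2 = 1 + ‖x‖ ^ 2 := Real.sq_sqrt (by positivity)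

lemma close_wt_bounds {x y : Spc n} (h : ‖x - y‖ ≤ ‖x‖ / 2) :
    wt y ≤ 2 * wt x ∧ wt x ≤ 2 * wt y := by
  have hxy : ‖y‖ ≤ ‖x‖ + ‖x - y‖ := by
    calc ‖y‖ = ‖x - (x - y)‖ := by rw [show x - (x - y) = y by abel]
    _ ≤ ‖x‖ + ‖x - y‖ := norm_sub_le _ _
  have hyx : ‖x‖ ≤ ‖y‖ + ‖x - y‖ := by
    calc ‖x‖ = ‖y + (x - y)‖ := by rw [show y + (x - y) = x by abel]
    _ ≤ ‖y‖ + ‖x - y‖ := norm_add_le _ _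
  have hx0 := norm_nonneg x
  have hy0 := norm_nonneg y
  constructor
  · calc wt y = Real.sqrt (wt y ^ 2) := (Real.sqrt_sq (wt_pos y).le).symm
    _ ≤ Real.sqrt ((2 * wt x) ^ 2) := Real.sqrt_le_sqrt (by
        rw [wt_sq, mul_pow, wt_sq]; nlinarith)
    _ = 2 * wt x := Real.sqrt_sq (by have := wt_pos x; linarith)
  · calc wt x = Real.sqrt (wt x ^ 2) := (Real.sqrt_sq (wt_pos x).le).symm
    _ ≤ Real.sqrt ((2 * wt y) ^ 2) := Real.sqrt_le_sqrt (by
        rw [wt_sq, mul_pow, wt_sq]; nlinarith)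
    _ = 2 * wt y := Real.sqrt_sq (by have := wt_pos y; linarith)

lemma rpow_le_of_le_double {a b : ℝ} (ha : 0 < a) (hab : a ≤ b) (hba : b ≤ 2 * a) (γ : ℝ) :
    b ^ γ ≤ 2 ^ |γ| * a ^ γ := by
  have hb : 0 < b := ha.trans_le hab
  have hdiv : b ^ γ = (b / a) ^ γ * a ^ γ := by
    rw [← Real.mul_rpow (by positivity) ha.le, div_mul_cancel₀ _ (ne_of_gt ha)]
  rw [hdiv]
  refine mul_le_mul_of_nonneg_right ?_ (Real.rpow_nonneg ha.le γ)
  rcases le_or_gt 0 γ with hγ | hγ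
  · rw [abs_of_nonneg hγ]
    exact Real.rpow_le_rpow (by positivity) (by rw [div_le_iff₀ ha]; linarith) hγ
  · refine le_trans (Real.rpow_le_one_of_one_le_of_nonpos ((one_le_div ha).2 hab) hγ.le) ?_
    calc (1 : ℝ) = 2 ^ (0 : ℝ) := (Real.rpow_zero 2).symm
    _ ≤ 2 ^ |γ| := Real.rpow_le_rpow_of_exponent_le one_le_two (abs_nonneg γ)

lemma wt2_rpow_le_left {x y : Spc n} (h : ‖x - y‖ ≤ ‖x‖ / 2) (γ : ℝ) :
    wt2 x y ^ γ ≤ 2 ^ |γ| * wt x ^ γ :=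
  rpow_le_of_le_double (wt_pos x) (le_max_left _ _)
    (max_le (by have := wt_pos x; linarith) (close_wt_bounds h).1) γ

lemma wt2_rpow_le_right {x y : Spc n} (h : ‖x - y‖ ≤ ‖x‖ / 2) (γ : ℝ) :
    wt2 x y ^ γ ≤ 2 ^ |γ| * wt y ^ γ :=
  rpow_le_of_le_double (wt_pos y) (le_max_right _ _)
    (max_le (close_wt_bounds h).2 (by have := wt_pos y; linarith)) γ

/-- ENNReal helper: split a sum of two products against the two global norms. -/
lemma ofReal_le_const_mul {ι : Type*} [Fintype ι] {c : ℝ} {κ₁ κ₂ P Q P' Q' : ι → ℝ}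
    (hκ₁ : ∀ ρ, 0 ≤ κ₁ ρ) (hκ₂ : ∀ ρ, 0 ≤ κ₂ ρ)
    (hP : ∀ ρ, 0 ≤ P ρ) (hP' : ∀ ρ, 0 ≤ P' ρ) (hQ : ∀ ρ, 0 ≤ Q ρ) (hQ' : ∀ ρ, 0 ≤ Q' ρ)
    (hc : c ≤ ∑ ρ, (κ₁ ρ * (P ρ * Q ρ) + κ₂ ρ * (P' ρ * Q' ρ)))
    {A B : ℝ≥0∞} (hPA : ∀ ρ, ENNReal.ofReal (P ρ) ≤ A) (hQB : ∀ ρ, ENNReal.ofReal (Q ρ) ≤ B)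
    (hP'A : ∀ ρ, ENNReal.ofReal (P' ρ) ≤ A) (hQ'B : ∀ ρ, ENNReal.ofReal (Q' ρ) ≤ B) :
    ENNReal.ofReal c ≤ ENNReal.ofReal (∑ ρ, (κ₁ ρ + κ₂ ρ)) * (A * B) := by
  refine (ENNReal.ofReal_le_ofReal hc).trans ?_
  have step : ∀ ρ, ENNReal.ofReal (κ₁ ρ * (P ρ * Q ρ) + κ₂ ρ * (P' ρ * Q' ρ))
      ≤ (ENNReal.ofReal (κ₁ ρ) + ENNReal.ofReal (κ₂ ρ)) * (A * B) := by
    intro ρ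
    refine le_trans (ENNReal.ofReal_add_le) ?_
    rw [add_mul]
    refine add_le_add ?_ ?_
    · rw [ENNReal.ofReal_mul (hκ₁ ρ), ENNReal.ofReal_mul (hP ρ)]
      exact mul_le_mul' le_rfl (mul_le_mul' (hPA ρ) (hQB ρ))
    · rw [ENNReal.ofReal_mul (hκ₂ ρ), ENNReal.ofReal_mul (hP' ρ)]
      exact mul_le_mul' le_rfl (mul_le_mul' (hP'A ρ) (hQ'B ρ))
  refine le_trans (ENNReal.ofReal_sum_of_nonneg (fun ρ _ => by
    have h1 := hκ₁ ρ; have h2 := hκ₂ ρ; have h3 := hP ρ; have h4 := hP' ρ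
    have h5 := hQ ρ; have h6 := hQ' ρ; positivity)).le ?_
  refine le_trans (Finset.sum_le_sum fun ρ _ => step ρ) ?_
  rw [← Finset.sum_mul, ENNReal.ofReal_sum_of_nonneg (fun ρ _ => by
    have h1 := hκ₁ ρ; have h2 := hκ₂ ρ; positivity)]
  refine mul_le_mul' (le_of_eq ?_) le_rfl
  exact Finset.sum_congr rfl fun ρ _ => (ENNReal.ofReal_add (hκ₁ ρ) (hκ₂ ρ)).symm


/-- Key estimate for one block of the anisotropic norm of a product. -/
lemma key_est {T lam δ δ' : ℝ} {k s : ℕ} (hT : 0 < T)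
    (b m j : ℕ) (hj : j ≤ s) (hmj : m + 2 * j ≤ 2 * s) (hb : b ≤ k) :
    ∃ C : ℝ, 0 < C ∧ ∀ u v : ℝ → Spc n → ℝ, AnisoReg T k s u → AnisoReg T k s v →
      eAniso0 T lam (δ + δ' + ↑b + ↑m) (mixDeriv T (b + m) j (u * v))
        ≤ ENNReal.ofReal C * (eAnisoKS T k s lam δ u * eAnisoKS T k s lam δ' v) := by
  have hM : (b + m) + 2 * j ≤ 2 * s + k := by omega
  obtain ⟨ι, hfin, au, av, iu, iv, hsums, hbnd⟩ := mix_prod_bound (n := n) hT hj hM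
  set C0 : ℝ := ∑ _ρ : ι, ((1 : ℝ) + 0) with hC0
  set C2 : ℝ := ∑ _ρ : ι, ((1 : ℝ) + 1) with hC2
  set CH : ℝ := ∑ ρ : ι, ((2 : ℝ) ^ |δ' + (av ρ : ℝ)| + 2 ^ |δ + (au ρ : ℝ)|) with hCH
  have hC0n : 0 ≤ C0 := Finset.sum_nonneg fun _ _ => by norm_num
  have hC2n : 0 ≤ C2 := Finset.sum_nonneg fun _ _ => by norm_num
  have hCHn : 0 ≤ CH := Finset.sum_nonneg fun _ _ => by positivity
  refine ⟨C0 + (C0 + C2 + C0 + CH) + C2 + 1, by linarith, ?_⟩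
  intro u v hu hv
  set A := eAnisoKS T k s lam δ u with hA
  set B := eAnisoKS T k s lam δ' v with hB
  have hfctu : ∀ ρ : ι, iu ρ ≤ s ∧ au ρ + 2 * iu ρ ≤ 2 * s + k := fun ρ => by
    have h1 := (hsums ρ).1; have h2 := (hsums ρ).2; omega
  have hfctv : ∀ ρ : ι, iv ρ ≤ s ∧ av ρ + 2 * iv ρ ≤ 2 * s + k := fun ρ => by
    have h1 := (hsums ρ).1; have h2 := (hsums ρ).2; omega
  have hsplit : ∀ ρ : ι, δ + δ' + (b : ℝ) + (m : ℝ) = δ + (au ρ : ℝ) + (δ' + (av ρ : ℝ)) :=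
    fun ρ => by
      have h' : ((au ρ : ℝ)) + (av ρ : ℝ) = (b : ℝ) + (m : ℝ) := by
        exact_mod_cast (hsums ρ).1
      linarith
  have bW : ∀ t, t ∈ Set.Icc (0 : ℝ) T →
      eWSup (δ + δ' + ↑b + ↑m) (mixDeriv T (b + m) j (u * v) t)
        ≤ ENNReal.ofReal C0 * (A * B) := by
    intro t ht
    refine iSup_le fun x => ?_
    have hreal : wt x ^ (δ + δ' + (b : ℝ) + m) * ‖mixDeriv T (b + m) j (u * v) t x‖
        ≤ ∑ ρ : ι, ((1 : ℝ) * ((wt x ^ (δ + (au ρ : ℝ)) * ‖mixDeriv T (au ρ) (iu ρ) u t x‖)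
            * (wt x ^ (δ' + (av ρ : ℝ)) * ‖mixDeriv T (av ρ) (iv ρ) v t x‖))
          + 0 * ((0 : ℝ) * 0)) := by
      refine le_trans (mul_le_mul_of_nonneg_left (hbnd u v hu hv t ht t ht x x).1
        (Real.rpow_nonneg (wt_pos x).le _)) ?_
      rw [Finset.mul_sum]
      refine le_of_eq (Finset.sum_congr rfl fun ρ _ => ?_)
      rw [hsplit ρ, Real.rpow_add (wt_pos x)]
      ring
    exact ofReal_le_const_mul (fun _ => zero_le_one) (fun _ => le_rfl)
      (fun ρ => mul_nonneg (Real.rpow_nonneg (wt_pos x).le _) (norm_nonneg _))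
      (fun _ => le_rfl)
      (fun ρ => mul_nonneg (Real.rpow_nonneg (wt_pos x).le _) (norm_nonneg _))
      (fun _ => le_rfl)
      hreal
      (fun ρ => nrm1 (γ := δ) (lam := lam) u (hfctu ρ).1 (hfctu ρ).2 ht x)
      (fun ρ => nrm1 (γ := δ') (lam := lam) v (hfctv ρ).1 (hfctv ρ).2 ht x)
      (fun ρ => by simp) (fun ρ => by simp)
  have bO : lam ≠ 0 → ∀ t, t ∈ Set.Icc (0 : ℝ) T →
      eOHold lam (mixDeriv T (b + m) j (u * v) t) ≤ ENNReal.ofReal (C0 + C2) * (A * B) := by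
    intro hl t ht
    rw [ENNReal.ofReal_add hC0n hC2n, add_mul, eOHold]
    refine add_le_add ?_ ?_
    · refine iSup_le fun x => iSup_le fun hx => ?_
      have hreal : ‖mixDeriv T (b + m) j (u * v) t x‖
          ≤ ∑ ρ : ι, ((1 : ℝ) * (‖mixDeriv T (au ρ) (iu ρ) u t x‖
              * ‖mixDeriv T (av ρ) (iv ρ) v t x‖) + 0 * ((0 : ℝ) * 0)) := by
        refine le_trans (hbnd u v hu hv t ht t ht x x).1 (le_of_eq ?_)
        exact Finset.sum_congr rfl fun ρ _ => by ring
      exact ofReal_le_const_mul (fun _ => zero_le_one) (fun _ => le_rfl)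
        (fun ρ => norm_nonneg _) (fun _ => le_rfl) (fun ρ => norm_nonneg _) (fun _ => le_rfl)
        hreal
        (fun ρ => nrm3a (γ := δ) hl u (hfctu ρ).1 (hfctu ρ).2 ht hx)
        (fun ρ => nrm3a (γ := δ') hl v (hfctv ρ).1 (hfctv ρ).2 ht hx)
        (fun ρ => by simp) (fun ρ => by simp)
    · refine iSup_le fun x => iSup_le fun y => iSup_le fun hxy => ?_
      have hdl : (0 : ℝ) < ‖x - y‖ ^ lam :=
        Real.rpow_pos_of_pos (norm_pos_iff.2 (sub_ne_zero.2 hxy.2.2)) lam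
      have hreal : ‖mixDeriv T (b + m) j (u * v) t x - mixDeriv T (b + m) j (u * v) t y‖
            / ‖x - y‖ ^ lam
          ≤ ∑ ρ : ι, ((1 : ℝ)
              * ((‖mixDeriv T (au ρ) (iu ρ) u t x - mixDeriv T (au ρ) (iu ρ) u t y‖
                  / ‖x - y‖ ^ lam) * ‖mixDeriv T (av ρ) (iv ρ) v t x‖)
            + (1 : ℝ) * (‖mixDeriv T (au ρ) (iu ρ) u t y‖
                * (‖mixDeriv T (av ρ) (iv ρ) v t x - mixDeriv T (av ρ) (iv ρ) v t y‖
                  / ‖x - y‖ ^ lam))) := by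
        refine le_trans ((div_le_div_iff_of_pos_right hdl).2 (hbnd u v hu hv t ht t ht x y).2.1) ?_
        rw [Finset.sum_div]
        refine le_of_eq (Finset.sum_congr rfl fun ρ _ => ?_)
        field_simp
      exact ofReal_le_const_mul (fun _ => zero_le_one) (fun _ => zero_le_one)
        (fun ρ => div_nonneg (norm_nonneg _) hdl.le) (fun ρ => norm_nonneg _)
        (fun ρ => norm_nonneg _) (fun ρ => div_nonneg (norm_nonneg _) hdl.le)
        hreal
        (fun ρ => nrm3b (γ := δ) hl u (hfctu ρ).1 (hfctu ρ).2 ht hxy)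
        (fun ρ => nrm3a (γ := δ') hl v (hfctv ρ).1 (hfctv ρ).2 ht hxy.1)
        (fun ρ => nrm3a (γ := δ) hl u (hfctu ρ).1 (hfctu ρ).2 ht hxy.2.1)
        (fun ρ => nrm3b (γ := δ') hl v (hfctv ρ).1 (hfctv ρ).2 ht hxy)
  have bH : lam ≠ 0 → ∀ t, t ∈ Set.Icc (0 : ℝ) T →
      eWHold lam (δ + δ' + ↑b + ↑m) (mixDeriv T (b + m) j (u * v) t)
        ≤ ENNReal.ofReal CH * (A * B) := by
    intro hl t ht
    refine iSup_le fun x => iSup_le fun y => iSup_le fun hxy => ?_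
    have hw2 : (0 : ℝ) < wt2 x y := lt_of_lt_of_le (wt_pos x) (le_max_left _ _)
    have hdl : (0 : ℝ) < ‖x - y‖ ^ lam :=
      Real.rpow_pos_of_pos (norm_pos_iff.2 (sub_ne_zero.2 hxy.1)) lam
    have hreal : wt2 x y ^ (δ + δ' + (b : ℝ) + m + lam)
          * ‖mixDeriv T (b + m) j (u * v) t x - mixDeriv T (b + m) j (u * v) t y‖
          / ‖x - y‖ ^ lam
        ≤ ∑ ρ : ι, ((2 : ℝ) ^ |δ' + (av ρ : ℝ)|
            * ((wt2 x y ^ (δ + (au ρ : ℝ) + lam)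
                * ‖mixDeriv T (au ρ) (iu ρ) u t x - mixDeriv T (au ρ) (iu ρ) u t y‖
                / ‖x - y‖ ^ lam)
              * (wt x ^ (δ' + (av ρ : ℝ)) * ‖mixDeriv T (av ρ) (iv ρ) v t x‖))
          + (2 : ℝ) ^ |δ + (au ρ : ℝ)|
            * ((wt y ^ (δ + (au ρ : ℝ)) * ‖mixDeriv T (au ρ) (iu ρ) u t y‖)
              * (wt2 x y ^ (δ' + (av ρ : ℝ) + lam)
                * ‖mixDeriv T (av ρ) (iv ρ) v t x - mixDeriv T (av ρ) (iv ρ) v t y‖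
                / ‖x - y‖ ^ lam))) := by
      refine le_trans ((div_le_div_iff_of_pos_right hdl).2 (mul_le_mul_of_nonneg_left
        (hbnd u v hu hv t ht t ht x y).2.1 (Real.rpow_nonneg hw2.le _))) ?_
      rw [Finset.mul_sum, Finset.sum_div]
      refine Finset.sum_le_sum fun ρ _ => ?_
      have e1 : wt2 x y ^ (δ + δ' + (b : ℝ) + m + lam)
          = wt2 x y ^ (δ + (au ρ : ℝ) + lam) * wt2 x y ^ (δ' + (av ρ : ℝ)) := by
        rw [← Real.rpow_add hw2]; congr 1; have := hsplit ρ; linarith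
      have e2 : wt2 x y ^ (δ + δ' + (b : ℝ) + m + lam)
          = wt2 x y ^ (δ + (au ρ : ℝ)) * wt2 x y ^ (δ' + (av ρ : ℝ) + lam) := by
        rw [← Real.rpow_add hw2]; congr 1; have := hsplit ρ; linarith
      have hc1 : wt2 x y ^ (δ' + (av ρ : ℝ)) * ‖mixDeriv T (av ρ) (iv ρ) v t x‖
          ≤ (2 : ℝ) ^ |δ' + (av ρ : ℝ)|
            * (wt x ^ (δ' + (av ρ : ℝ)) * ‖mixDeriv T (av ρ) (iv ρ) v t x‖) :=
        le_trans (mul_le_mul_of_nonneg_right (wt2_rpow_le_left hxy.2 _) (norm_nonneg _))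
          (le_of_eq (by ring))
      have hc2 : wt2 x y ^ (δ + (au ρ : ℝ)) * ‖mixDeriv T (au ρ) (iu ρ) u t y‖
          ≤ (2 : ℝ) ^ |δ + (au ρ : ℝ)|
            * (wt y ^ (δ + (au ρ : ℝ)) * ‖mixDeriv T (au ρ) (iu ρ) u t y‖) :=
        le_trans (mul_le_mul_of_nonneg_right (wt2_rpow_le_right hxy.2 _) (norm_nonneg _))
          (le_of_eq (by ring))
      have h0u : (0 : ℝ) ≤ wt2 x y ^ (δ + (au ρ : ℝ) + lam)
          * ‖mixDeriv T (au ρ) (iu ρ) u t x - mixDeriv T (au ρ) (iu ρ) u t y‖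
          / ‖x - y‖ ^ lam :=
        div_nonneg (mul_nonneg (Real.rpow_nonneg hw2.le _) (norm_nonneg _)) hdl.le
      have h0v : (0 : ℝ) ≤ wt2 x y ^ (δ' + (av ρ : ℝ) + lam)
          * ‖mixDeriv T (av ρ) (iv ρ) v t x - mixDeriv T (av ρ) (iv ρ) v t y‖
          / ‖x - y‖ ^ lam :=
        div_nonneg (mul_nonneg (Real.rpow_nonneg hw2.le _) (norm_nonneg _)) hdl.le
      calc wt2 x y ^ (δ + δ' + (b : ℝ) + m + lam)
            * (‖mixDeriv T (au ρ) (iu ρ) u t x - mixDeriv T (au ρ) (iu ρ) u t y‖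
                * ‖mixDeriv T (av ρ) (iv ρ) v t x‖
              + ‖mixDeriv T (au ρ) (iu ρ) u t y‖
                * ‖mixDeriv T (av ρ) (iv ρ) v t x - mixDeriv T (av ρ) (iv ρ) v t y‖)
            / ‖x - y‖ ^ lam
          = (wt2 x y ^ (δ + (au ρ : ℝ) + lam)
              * ‖mixDeriv T (au ρ) (iu ρ) u t x - mixDeriv T (au ρ) (iu ρ) u t y‖
              / ‖x - y‖ ^ lam)
            * (wt2 x y ^ (δ' + (av ρ : ℝ)) * ‖mixDeriv T (av ρ) (iv ρ) v t x‖)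
          + (wt2 x y ^ (δ + (au ρ : ℝ)) * ‖mixDeriv T (au ρ) (iu ρ) u t y‖)
            * (wt2 x y ^ (δ' + (av ρ : ℝ) + lam)
              * ‖mixDeriv T (av ρ) (iv ρ) v t x - mixDeriv T (av ρ) (iv ρ) v t y‖
              / ‖x - y‖ ^ lam) := by
            rw [mul_add, add_div]
            congr 1
            · rw [e1]; ring
            · rw [e2]; ring
        _ ≤ _ := by
            refine add_le_add ?_ ?_
            · exact le_trans (mul_le_mul_of_nonneg_left hc1 h0u) (le_of_eq (by ring))
            · exact le_trans (mul_le_mul_of_nonneg_right hc2 h0v) (le_of_eq (by ring))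
    exact ofReal_le_const_mul (fun ρ => by positivity) (fun ρ => by positivity)
      (fun ρ => div_nonneg (mul_nonneg (Real.rpow_nonneg hw2.le _) (norm_nonneg _)) hdl.le)
      (fun ρ => mul_nonneg (Real.rpow_nonneg (wt_pos y).le _) (norm_nonneg _))
      (fun ρ => mul_nonneg (Real.rpow_nonneg (wt_pos x).le _) (norm_nonneg _))
      (fun ρ => div_nonneg (mul_nonneg (Real.rpow_nonneg hw2.le _) (norm_nonneg _)) hdl.le)
      hreal
      (fun ρ => nrm2 (γ := δ) hl u (hfctu ρ).1 (hfctu ρ).2 ht hxy)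
      (fun ρ => nrm1 (γ := δ') (lam := lam) v (hfctv ρ).1 (hfctv ρ).2 ht x)
      (fun ρ => nrm1 (γ := δ) (lam := lam) u (hfctu ρ).1 (hfctu ρ).2 ht y)
      (fun ρ => nrm2 (γ := δ') hl v (hfctv ρ).1 (hfctv ρ).2 ht hxy)
  have bT : lam ≠ 0 → ∀ t₁ t₂ : Set.Icc (0 : ℝ) T, (t₁ : ℝ) ≠ (t₂ : ℝ) → ∀ x : Spc n,
      ENNReal.ofReal (wt x ^ (δ + δ' + (b : ℝ) + m)
          * ‖mixDeriv T (b + m) j (u * v) t₁ x - mixDeriv T (b + m) j (u * v) t₂ x‖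
          / |(t₁ : ℝ) - (t₂ : ℝ)| ^ (lam / 2))
        ≤ ENNReal.ofReal C2 * (A * B) := by
    intro hl t₁ t₂ hne x
    have hτ : (0 : ℝ) < |(t₁ : ℝ) - (t₂ : ℝ)| ^ (lam / 2) :=
      Real.rpow_pos_of_pos (abs_pos.2 (sub_ne_zero.2 hne)) _
    have hreal : wt x ^ (δ + δ' + (b : ℝ) + m)
          * ‖mixDeriv T (b + m) j (u * v) t₁ x - mixDeriv T (b + m) j (u * v) t₂ x‖
          / |(t₁ : ℝ) - (t₂ : ℝ)| ^ (lam / 2)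
        ≤ ∑ ρ : ι, ((1 : ℝ)
            * ((wt x ^ (δ + (au ρ : ℝ))
                * ‖mixDeriv T (au ρ) (iu ρ) u t₁ x - mixDeriv T (au ρ) (iu ρ) u t₂ x‖
                / |(t₁ : ℝ) - (t₂ : ℝ)| ^ (lam / 2))
              * (wt x ^ (δ' + (av ρ : ℝ)) * ‖mixDeriv T (av ρ) (iv ρ) v t₁ x‖))
          + (1 : ℝ)
            * ((wt x ^ (δ + (au ρ : ℝ)) * ‖mixDeriv T (au ρ) (iu ρ) u t₂ x‖)
              * (wt x ^ (δ' + (av ρ : ℝ))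
                * ‖mixDeriv T (av ρ) (iv ρ) v t₁ x - mixDeriv T (av ρ) (iv ρ) v t₂ x‖
                / |(t₁ : ℝ) - (t₂ : ℝ)| ^ (lam / 2)))) := by
      refine le_trans ((div_le_div_iff_of_pos_right hτ).2 (mul_le_mul_of_nonneg_left
        (hbnd u v hu hv t₁ t₁.2 t₂ t₂.2 x x).2.2 (Real.rpow_nonneg (wt_pos x).le _))) ?_
      rw [Finset.mul_sum, Finset.sum_div]
      refine le_of_eq (Finset.sum_congr rfl fun ρ _ => ?_)
      rw [hsplit ρ, Real.rpow_add (wt_pos x)]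
      ring
    exact ofReal_le_const_mul (fun _ => zero_le_one) (fun _ => zero_le_one)
      (fun ρ => div_nonneg (mul_nonneg (Real.rpow_nonneg (wt_pos x).le _) (norm_nonneg _))
        hτ.le)
      (fun ρ => mul_nonneg (Real.rpow_nonneg (wt_pos x).le _) (norm_nonneg _))
      (fun ρ => mul_nonneg (Real.rpow_nonneg (wt_pos x).le _) (norm_nonneg _))
      (fun ρ => div_nonneg (mul_nonneg (Real.rpow_nonneg (wt_pos x).le _) (norm_nonneg _))
        hτ.le)
      hreal
      (fun ρ => nrm4 (γ := δ) hl u (hfctu ρ).1 (hfctu ρ).2 t₁.2 t₂.2 hne x)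
      (fun ρ => nrm1 (γ := δ') (lam := lam) v (hfctv ρ).1 (hfctv ρ).2 t₁.2 x)
      (fun ρ => nrm1 (γ := δ) (lam := lam) u (hfctu ρ).1 (hfctu ρ).2 t₂.2 x)
      (fun ρ => nrm4 (γ := δ') hl v (hfctv ρ).1 (hfctv ρ).2 t₁.2 t₂.2 hne x)
  by_cases hl : lam = 0
  · rw [eAniso0, if_pos hl, add_zero]
    calc (⨆ t : Set.Icc (0 : ℝ) T,
          eHol0 lam (δ + δ' + ↑b + ↑m) (mixDeriv T (b + m) j (u * v) ↑t))
        ≤ ENNReal.ofReal C0 * (A * B) := iSup_le fun t => by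
          rw [eHol0, if_pos hl]; exact bW t t.2
      _ ≤ _ := mul_le_mul' (ENNReal.ofReal_le_ofReal (by linarith)) le_rfl
  · rw [eAniso0, if_neg hl]
    have h1 : (⨆ t : Set.Icc (0 : ℝ) T,
          eHol0 lam (δ + δ' + ↑b + ↑m) (mixDeriv T (b + m) j (u * v) ↑t))
        ≤ ENNReal.ofReal (C0 + C2 + C0 + CH) * (A * B) := by
      refine iSup_le fun t => ?_
      rw [eHol0, if_neg hl]
      calc eOHold lam (mixDeriv T (b + m) j (u * v) ↑t)
            + eWSup (δ + δ' + ↑b + ↑m) (mixDeriv T (b + m) j (u * v) ↑t)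
            + eWHold lam (δ + δ' + ↑b + ↑m) (mixDeriv T (b + m) j (u * v) ↑t)
          ≤ ENNReal.ofReal (C0 + C2) * (A * B) + ENNReal.ofReal C0 * (A * B)
            + ENNReal.ofReal CH * (A * B) :=
            add_le_add (add_le_add (bO hl t t.2) (bW t t.2)) (bH hl t t.2)
        _ = ENNReal.ofReal (C0 + C2 + C0 + CH) * (A * B) := by
            rw [← add_mul, ← add_mul, ← ENNReal.ofReal_add (by linarith) hC0n,
              ← ENNReal.ofReal_add (by linarith) hCHn]
    have h2 : (⨆ (t₁ : Set.Icc (0 : ℝ) T) (t₂ : Set.Icc (0 : ℝ) T)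
          (_ : (t₁ : ℝ) ≠ (t₂ : ℝ)) (x : Spc n),
          ENNReal.ofReal (wt x ^ (δ + δ' + ↑b + ↑m)
            * ‖mixDeriv T (b + m) j (u * v) t₁ x - mixDeriv T (b + m) j (u * v) t₂ x‖
            / |(t₁ : ℝ) - (t₂ : ℝ)| ^ (lam / 2)))
        ≤ ENNReal.ofReal C2 * (A * B) :=
      iSup_le fun t₁ => iSup_le fun t₂ => iSup_le fun hne => iSup_le fun x =>
        bT hl t₁ t₂ hne x
    calc _ ≤ ENNReal.ofReal (C0 + C2 + C0 + CH) * (A * B)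
          + ENNReal.ofReal C2 * (A * B) := add_le_add h1 h2
      _ = ENNReal.ofReal (C0 + C2 + C0 + CH + C2) * (A * B) := by
          rw [← add_mul, ← ENNReal.ofReal_add (by linarith) hC2n]
      _ ≤ _ := mul_le_mul' (ENNReal.ofReal_le_ofReal (by linarith)) le_rfl


/-- The product of two regular functions is regular. -/
lemma prod_reg {T : ℝ} {k s : ℕ} {u v : ℝ → Spc n → ℝ} (hT : 0 < T)
    (hu : AnisoReg T k s u) (hv : AnisoReg T k s v) : AnisoReg T k s (u * v) := by
  classical
  refine ⟨fun x => (hu.1 x).mul (hv.1 x), fun j hj t ht => slice_contDiff (N := 2 * (s - j) + k) hT hj (by omega)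
    hu hv ht, fun j m hj hm => ?_⟩
  -- joint continuity of mixed derivatives
  let Φ : ContinuousMultilinearMap ℝ (fun _ : Fin m => Spc n) ℝ →ₗ[ℝ]
      ((Fin m → Fin n) → ℝ) :=
    { toFun := fun A σ => A fun l => EuclideanSpace.single (σ l) 1
      map_add' := fun A B => by
        funext σ; simp [ContinuousMultilinearMap.add_apply]
      map_smul' := fun c A => by
        funext σ; simp [ContinuousMultilinearMap.smul_apply] }
  have hker : LinearMap.ker Φ = ⊥ := by
    rw [LinearMap.ker_eq_bot']
    intro A hA
    have h1 : ∀ σ : Fin m → Fin n, A (fun l => EuclideanSpace.single (σ l) 1) = 0 :=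
      fun σ => congrFun hA σ
    have h2 := cmm_norm_le A
    rw [show (∑ σ : Fin m → Fin n, |A fun i => EuclideanSpace.single (σ i) 1|) = 0 from
      Finset.sum_eq_zero fun σ _ => by rw [h1 σ, abs_zero]] at h2
    exact norm_le_zero_iff.1 h2
  obtain ⟨Ψ, hΨ⟩ := Φ.exists_leftInverse_of_injective hker
  have hΨΦ : ∀ A, Ψ (Φ A) = A := fun A => by
    have h := LinearMap.ext_iff.1 hΨ A
    simpa using h
  choose ι hfin au av iu iv τu τv hsums hID using fun σ : Fin m → Fin n =>
    mix_leibniz (n := n) hT hj hm σ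
  have hcont : ∀ σ : Fin m → Fin n, Continuous fun p : Set.Icc (0 : ℝ) T × Spc n =>
      mixDeriv T m j (u * v) p.1 p.2 (fun l => EuclideanSpace.single (σ l) 1) := by
    intro σ
    have heq : (fun p : Set.Icc (0 : ℝ) T × Spc n =>
          mixDeriv T m j (u * v) p.1 p.2 (fun l => EuclideanSpace.single (σ l) 1))
        = fun p => ∑ ρ : ι σ,
            (mixDeriv T (au σ ρ) (iu σ ρ) u p.1 p.2
              (fun l => EuclideanSpace.single (τu σ ρ l) 1))
            * (mixDeriv T (av σ ρ) (iv σ ρ) v p.1 p.2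
              (fun l => EuclideanSpace.single (τv σ ρ l) 1)) := by
      funext p
      rw [show mixDeriv T m j (u * v) ↑p.1 p.2 (fun l => EuclideanSpace.single (σ l) 1)
          = pdF m σ (fun y => tDeriv T j (u * v) ↑p.1 y) p.2 from
        iteratedFDeriv_apply_basis m σ _ (slice_contDiff hT hj hm hu hv p.1.2) p.2,
        hID σ u v hu hv ↑p.1 p.1.2 p.2]
      refine Finset.sum_congr rfl fun ρ _ => ?_
      have hcdu : ContDiff ℝ (au σ ρ) fun y => tDeriv T (iu σ ρ) u (↑p.1) y := by
        have h1 := (hsums σ ρ).1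
        have h2 := (hsums σ ρ).2
        exact (hu.2.1 (iu σ ρ) (by omega) ↑p.1 p.1.2).of_le
          (natCast_le_withTop (by omega : au σ ρ ≤ 2 * (s - iu σ ρ) + k))
      have hcdv : ContDiff ℝ (av σ ρ) fun y => tDeriv T (iv σ ρ) v (↑p.1) y := by
        have h1 := (hsums σ ρ).1
        have h2 := (hsums σ ρ).2
        exact (hv.2.1 (iv σ ρ) (by omega) ↑p.1 p.1.2).of_le
          (natCast_le_withTop (by omega : av σ ρ ≤ 2 * (s - iv σ ρ) + k))
      exact (congrArg₂ (· * ·)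
        (iteratedFDeriv_apply_basis (au σ ρ) (τu σ ρ) _ hcdu p.2)
        (iteratedFDeriv_apply_basis (av σ ρ) (τv σ ρ) _ hcdv p.2)).symm
    rw [heq]
    refine continuous_finset_sum _ fun ρ _ => Continuous.mul ?_ ?_
    · have h1 := (hsums σ ρ).1
      have h2 := (hsums σ ρ).2
      exact ((ContinuousMultilinearMap.apply ℝ (fun _ : Fin (au σ ρ) => Spc n) ℝ
        (fun l => EuclideanSpace.single (τu σ ρ l) 1)).continuous).comp
        (hu.2.2 (iu σ ρ) (au σ ρ) (by omega) (by omega))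
    · have h1 := (hsums σ ρ).1
      have h2 := (hsums σ ρ).2
      exact ((ContinuousMultilinearMap.apply ℝ (fun _ : Fin (av σ ρ) => Spc n) ℝ
        (fun l => EuclideanSpace.single (τv σ ρ l) 1)).continuous).comp
        (hv.2.2 (iv σ ρ) (av σ ρ) (by omega) (by omega))
  have hfun : (fun p : Set.Icc (0 : ℝ) T × Spc n => mixDeriv T m j (u * v) p.1 p.2)
      = fun p => Ψ (fun σ => mixDeriv T m j (u * v) p.1 p.2
          (fun l => EuclideanSpace.single (σ l) 1)) := by
    funext p
    exact (hΨΦ _).symm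
  rw [hfun]
  exact Ψ.continuous_of_finiteDimensional.comp (continuous_pi fun σ => hcont σ)

/-- multiplication `C^{k,𝐬(s,λ,δ)}_T × C^{k,𝐬(s,λ,δ')}_T → C^{k,𝐬(s,λ,δ+δ')}_T`. -/
theorem stmt3 (n : ℕ) (s k : ℕ) (lam δ δ' T : ℝ)
    (hlam : lam ∈ Set.Icc (0 : ℝ) 1) (hT : 0 < T) :
    ∃ c : ℝ, 0 < c ∧ ∀ u v : ℝ → Spc n → ℝ,
      AnisoMem T k s lam δ u → AnisoMem T k s lam δ' v →
      AnisoMem T k s lam (δ + δ') (u * v) ∧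
        eAnisoKS T k s lam (δ + δ') (u * v) ≤
          ENNReal.ofReal c * (eAnisoKS T k s lam δ u * eAnisoKS T k s lam δ' v) := by
  classical
  have hchoose : ∀ b m j : ℕ, ∃ C : ℝ, 0 < C ∧ (b ≤ k → ∀ u v : ℝ → Spc n → ℝ,
      AnisoReg T k s u → AnisoReg T k s v →
      (if m + 2 * j ≤ 2 * s then
        eAniso0 T lam (δ + δ' + ↑b + ↑m) (mixDeriv T (b + m) j (u * v)) else 0)
        ≤ ENNReal.ofReal C * (eAnisoKS T k s lam δ u * eAnisoKS T k s lam δ' v)) := by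
    intro b m j
    by_cases h : b ≤ k ∧ m + 2 * j ≤ 2 * s
    · obtain ⟨C, hC, hbnd⟩ := key_est (n := n) (lam := lam) (δ := δ) (δ' := δ') hT b m j
        (by omega) h.2 h.1
      exact ⟨C, hC, fun _ u v hu hv => by rw [if_pos h.2]; exact hbnd u v hu hv⟩
    · refine ⟨1, one_pos, fun hb u v hu hv => ?_⟩
      rw [if_neg (by tauto)]
      exact zero_le
  choose C hCpos hCbnd using hchoose
  refine ⟨∑ b ∈ Finset.range (k + 1), ∑ m ∈ Finset.range (2 * s + 1),
    ∑ j ∈ Finset.range (s + 1), C b m j, ?_, ?_⟩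
  · refine Finset.sum_pos (fun b _ => Finset.sum_pos (fun m _ => Finset.sum_pos
      (fun j _ => hCpos b m j) (Finset.nonempty_range_iff.mpr (Nat.succ_ne_zero _)))
      (Finset.nonempty_range_iff.mpr (Nat.succ_ne_zero _)))
      (Finset.nonempty_range_iff.mpr (Nat.succ_ne_zero _))
  · intro u v hu hv
    have hofsum : ENNReal.ofReal (∑ b ∈ Finset.range (k + 1), ∑ m ∈ Finset.range (2 * s + 1),
          ∑ j ∈ Finset.range (s + 1), C b m j)
        = ∑ b ∈ Finset.range (k + 1), ∑ m ∈ Finset.range (2 * s + 1),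
          ∑ j ∈ Finset.range (s + 1), ENNReal.ofReal (C b m j) := by
      rw [ENNReal.ofReal_sum_of_nonneg (fun b _ => Finset.sum_nonneg fun m _ =>
        Finset.sum_nonneg fun j _ => (hCpos b m j).le)]
      refine Finset.sum_congr rfl fun b _ => ?_
      rw [ENNReal.ofReal_sum_of_nonneg (fun m _ => Finset.sum_nonneg fun j _ =>
        (hCpos b m j).le)]
      refine Finset.sum_congr rfl fun m _ => ?_
      exact ENNReal.ofReal_sum_of_nonneg fun j _ => (hCpos b m j).le
    have hineq : eAnisoKS T k s lam (δ + δ') (u * v)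
        ≤ ENNReal.ofReal (∑ b ∈ Finset.range (k + 1), ∑ m ∈ Finset.range (2 * s + 1),
            ∑ j ∈ Finset.range (s + 1), C b m j)
          * (eAnisoKS T k s lam δ u * eAnisoKS T k s lam δ' v) := by
      rw [eAnisoKS, hofsum]
      calc ∑ b ∈ Finset.range (k + 1), ∑ m ∈ Finset.range (2 * s + 1),
            ∑ j ∈ Finset.range (s + 1), (if m + 2 * j ≤ 2 * s then
              eAniso0 T lam (δ + δ' + ↑b + ↑m) (mixDeriv T (b + m) j (u * v)) else 0)
          ≤ ∑ b ∈ Finset.range (k + 1), ∑ m ∈ Finset.range (2 * s + 1),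
            ∑ j ∈ Finset.range (s + 1), ENNReal.ofReal (C b m j)
              * (eAnisoKS T k s lam δ u * eAnisoKS T k s lam δ' v) := by
            refine Finset.sum_le_sum fun b hb => Finset.sum_le_sum fun m _ =>
              Finset.sum_le_sum fun j _ => ?_
            exact hCbnd b m j (by have := Finset.mem_range.1 hb; omega) u v hu.1 hv.1
        _ = (∑ b ∈ Finset.range (k + 1), ∑ m ∈ Finset.range (2 * s + 1),
            ∑ j ∈ Finset.range (s + 1), ENNReal.ofReal (C b m j))
              * (eAnisoKS T k s lam δ u * eAnisoKS T k s lam δ' v) := by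
            simp_rw [← Finset.sum_mul]
    refine ⟨⟨prod_reg hT hu.1 hv.1, ?_⟩, hineq⟩
    exact ne_top_of_le_ne_top (ENNReal.mul_ne_top ENNReal.ofReal_ne_top
      (ENNReal.mul_ne_top hu.2 hv.2)) hineq
end NSdeRham

end
end

section
/- Let n ≥ 2, 0 ≤ q ≤ n, δ > n/2, μ > 0, T > 0, and let w be a q-form on ℝⁿ×[0,T] with ‖w‖_{C^{0,s(0,0,δ)}_{T,Λ^q}} < ∞ and ‖∇w‖_{C^{0,s(0,0,δ+1)}_{T,Λ^q}} < ∞. Then there exist constants c_q^{(1)}, c_q^{(2)} > 0, independent of t, u and w, such that for every sufficiently regular q-form u on ℝⁿ×[0,T] with u(·,t) and ∇u(·,t) in L² for each t, and for all t ∈ [0,T]: |(B_q(w,u)(·,t), u(·,t))_{L²_{Λ^q}(ℝⁿ)}| ≤ (μ/2)‖∇u(·,t)‖²_{L²_{Λ^q}(ℝⁿ)} + ( (2(c_q^{(2)})²/μ)‖w‖²_{C^{0,s(0,0,δ)}_{T,Λ^q}} + c_q^{(1)}‖∇w‖_{C^{0,s(0,0,δ+1)}_{T,Λ^q}} ) ‖u(·,t)‖²_{L²_{Λ^q}(ℝⁿ)}.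 -/
open scoped BigOperators ENNReal Classical
open Filter MeasureTheory

noncomputable section

namespace NSdeRham

variable {n : ℕ}

section helpers

variable {n q : ℕ}

lemma one_le_wt (x : Spc n) : 1 ≤ wt x := by
  rw [wt, Real.le_sqrt zero_le_one (by positivity)]
  nlinarith [sq_nonneg (‖x‖ : ℝ)]

lemma one_le_wt_rpow {δ : ℝ} (hδ : 0 ≤ δ) (x : Spc n) : 1 ≤ wt x ^ δ :=
  Real.one_le_rpow (one_le_wt x) hδ

lemma abs_le_eSupT {T δ : ℝ} (hδ : 0 ≤ δ) (w : FormT n q) (hfin : eSupT T δ w ≠ ⊤)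
    (I : Idx n q) {t : ℝ} (ht : t ∈ Set.Icc (0:ℝ) T) (x : Spc n) :
    |w I t x| ≤ (eSupT T δ w).toReal := by
  have h1 : ENNReal.ofReal (wt x ^ δ * |w I t x|) ≤ eSupT T δ w := by
    refine le_trans ?_ (Finset.single_le_sum
      (f := fun I : Idx n q => ⨆ (t : Set.Icc (0:ℝ) T) (x : Spc n),
        ENNReal.ofReal (wt x ^ δ * |w I t x|)) (fun _ _ => zero_le) (Finset.mem_univ I))
    exact le_iSup₂ (f := fun (tt : Set.Icc (0:ℝ) T) (x : Spc n) =>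
      ENNReal.ofReal (wt x ^ δ * |w I tt x|)) ⟨t, ht⟩ x
  have h2 : wt x ^ δ * |w I t x| ≤ (eSupT T δ w).toReal :=
    (ENNReal.ofReal_le_iff_le_toReal hfin).mp h1
  exact le_trans (le_mul_of_one_le_left (abs_nonneg _) (one_le_wt_rpow hδ x)) h2

lemma abs_pd_le_eSupGradT {T δ : ℝ} (hδ : 0 ≤ δ) (w : FormT n q)
    (hfin : eSupGradT T δ w ≠ ⊤) (I : Idx n q) (i : Fin n) {t : ℝ}
    (ht : t ∈ Set.Icc (0:ℝ) T) (x : Spc n) :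
    |pd i (fun y => w I t y) x| ≤ (eSupGradT T δ w).toReal := by
  have h1 : ENNReal.ofReal (wt x ^ δ * |pd i (fun y => w I t y) x|) ≤ eSupGradT T δ w := by
    refine le_trans ?_ (Finset.single_le_sum
      (f := fun I : Idx n q => ∑ i : Fin n, ⨆ (t : Set.Icc (0:ℝ) T) (x : Spc n),
        ENNReal.ofReal (wt x ^ δ * |pd i (fun y => w I t y) x|))
      (fun _ _ => zero_le) (Finset.mem_univ I))
    refine le_trans ?_ (Finset.single_le_sum
      (f := fun i : Fin n => ⨆ (t : Set.Icc (0:ℝ) T) (x : Spc n),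
        ENNReal.ofReal (wt x ^ δ * |pd i (fun y => w I t y) x|))
      (fun _ _ => zero_le) (Finset.mem_univ i))
    exact le_iSup₂ (f := fun (tt : Set.Icc (0:ℝ) T) (x : Spc n) =>
      ENNReal.ofReal (wt x ^ δ * |pd i (fun y => w I tt y) x|)) ⟨t, ht⟩ x
  have h2 := (ENNReal.ofReal_le_iff_le_toReal hfin).mp h1
  exact le_trans (le_mul_of_one_le_left (abs_nonneg _) (one_le_wt_rpow hδ x)) h2

lemma abs_dS_le (v : FormS n q) (x : Spc n) (c : Fin n → ℝ) (hc : ∀ i, 0 ≤ c i)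
    (h : ∀ (i : Fin n) (I : Idx n q), |pd i (v I) x| ≤ c i) (J : Idx n (q+1)) :
    |dS v J x| ≤ ∑ i, c i := by
  rw [dS]
  refine le_trans (Finset.abs_sum_le_sum_abs _ _) (Finset.sum_le_sum ?_)
  intro i _
  by_cases hi : i ∈ J.1
  · rw [dif_pos hi, abs_mul, abs_pow, abs_neg, abs_one, one_pow, one_mul]
    exact h i _
  · rw [dif_neg hi, abs_zero]; exact hc i

lemma abs_coDS_le (v : FormS n q) (x : Spc n) (c : Fin n → ℝ) (hc : ∀ i, 0 ≤ c i)
    (h : ∀ (i : Fin n) (I : Idx n q), |pd i (v I) x| ≤ c i) (K : Idx n (q-1)) :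
    |coDS v K x| ≤ ∑ i, c i := by
  rw [coDS, abs_neg]
  refine le_trans (Finset.abs_sum_le_sum_abs _ _) (Finset.sum_le_sum ?_)
  intro i _
  by_cases hi : i ∉ K.1 ∧ (insert i K.1).card = q
  · rw [dif_pos hi, abs_mul, abs_pow, abs_neg, abs_one, one_pow, one_mul]
    exact h i _
  · rw [dif_neg hi, abs_zero]; exact hc i

lemma abs_dLowS_le (p : FormS n (q-1)) (x : Spc n) (c : Fin n → ℝ) (hc : ∀ i, 0 ≤ c i)
    (h : ∀ (i : Fin n) (K : Idx n (q-1)), |pd i (p K) x| ≤ c i) (J : Idx n q) :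
    |dLowS p J x| ≤ ∑ i, c i := by
  rw [dLowS]
  refine le_trans (Finset.abs_sum_le_sum_abs _ _) (Finset.sum_le_sum ?_)
  intro i _
  by_cases hi : i ∈ J.1 ∧ (J.1.erase i).card = q - 1
  · rw [dif_pos hi, abs_mul, abs_pow, abs_neg, abs_one, one_pow, one_mul]
    exact h i _
  · rw [dif_neg hi, abs_zero]; exact hc i

/-- A bilinear (linear-map-valued) map on finite-dimensional spaces as a continuous
bilinear map. -/
def bil2 {E F G : Type*} [NormedAddCommGroup E] [NormedSpace ℝ E] [NormedAddCommGroup F]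
    [NormedSpace ℝ F] [NormedAddCommGroup G] [NormedSpace ℝ G]
    [FiniteDimensional ℝ E] [FiniteDimensional ℝ F]
    (M : E →ₗ[ℝ] F →ₗ[ℝ] G) : E →L[ℝ] F →L[ℝ] G :=
  LinearMap.toContinuousLinearMap
    ((LinearMap.toContinuousLinearMap : (F →ₗ[ℝ] G) ≃ₗ[ℝ] (F →L[ℝ] G)).toLinearMap.comp M)

lemma bil2_entry_le {E F : Type*} [NormedAddCommGroup E] [NormedSpace ℝ E]
    [FiniteDimensional ℝ E] [NormedAddCommGroup F] [NormedSpace ℝ F]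
    [FiniteDimensional ℝ F] {γ : Type*} [Fintype γ]
    (M : E →ₗ[ℝ] F →ₗ[ℝ] (γ → ℝ)) (a : E) (b : F) (K : γ) {ca cb : ℝ}
    (ha : ‖a‖ ≤ ca) (hb : ‖b‖ ≤ cb) :
    |M a b K| ≤ ‖bil2 M‖ * ca * cb := by
  have hca : 0 ≤ ca := (norm_nonneg a).trans ha
  have h1 : |M a b K| ≤ ‖bil2 M a b‖ := by
    rw [show M a b K = (bil2 M a b) K from rfl, ← Real.norm_eq_abs]
    exact norm_le_pi_norm (bil2 M a b) K
  refine h1.trans (((bil2 M).le_opNorm₂ a b).trans ?_)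
  exact mul_le_mul (mul_le_mul_of_nonneg_left ha ((bil2 M).opNorm_nonneg)) hb (norm_nonneg b)
    (mul_nonneg ((bil2 M).opNorm_nonneg) hca)

lemma pd_add {f g : Spc n → ℝ} {x : Spc n} (hf : DifferentiableAt ℝ f x)
    (hg : DifferentiableAt ℝ g x) (i : Fin n) :
    pd i (fun y => f y + g y) x = pd i f x + pd i g x := by
  rw [pd, pd, pd, fderiv_fun_add hf hg]
  simp

lemma pd_clm_bilin_le {α β γ : Type*} [Fintype α] [Fintype β] [Fintype γ]
    (B : (α → ℝ) →L[ℝ] (β → ℝ) →L[ℝ] (γ → ℝ)) (g : Spc n → α → ℝ) (h : Spc n → β → ℝ)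
    {x : Spc n}
    (hg : ∀ a, DifferentiableAt ℝ (fun y => g y a) x)
    (hh : ∀ b, DifferentiableAt ℝ (fun y => h y b) x)
    (i : Fin n) (K : γ) :
    |pd i (fun y => B (g y) (h y) K) x| ≤
      ‖B‖ * (‖g x‖ * ‖fun b => pd i (fun y => h y b) x‖ +
        ‖fun a => pd i (fun y => g y a) x‖ * ‖h x‖) := by
  set e := EuclideanSpace.single i (1:ℝ) with he
  set g' : Spc n →L[ℝ] (α → ℝ) :=
    ContinuousLinearMap.pi fun a => fderiv ℝ (fun y => g y a) x with hg'def
  set h' : Spc n →L[ℝ] (β → ℝ) :=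
    ContinuousLinearMap.pi fun b => fderiv ℝ (fun y => h y b) x with hh'def
  have hg' : HasFDerivAt g g' x := hasFDerivAt_pi.2 fun a => (hg a).hasFDerivAt
  have hh' : HasFDerivAt h h' x := hasFDerivAt_pi.2 fun b => (hh b).hasFDerivAt
  have hc : HasFDerivAt (fun y => B (g y)) (B.comp g') x := B.hasFDerivAt.comp x hg'
  have hF : HasFDerivAt (fun y => B (g y) (h y))
      (((B (g x)).comp h') + (B.comp g').flip (h x)) x := hc.clm_apply hh'
  have hFK : HasFDerivAt (fun y => B (g y) (h y) K)
      ((ContinuousLinearMap.proj K).comp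
        (((B (g x)).comp h') + (B.comp g').flip (h x))) x :=
    (ContinuousLinearMap.proj (R := ℝ) (φ := fun _ : γ => ℝ) K).hasFDerivAt.comp x hF
  have hpd : pd i (fun y => B (g y) (h y) K) x
      = (B (g x)) (h' e) K + (B (g' e)) (h x) K := by
    rw [pd, hFK.fderiv]
    simp [ContinuousLinearMap.comp_apply, ContinuousLinearMap.add_apply,
      ContinuousLinearMap.flip_apply, ContinuousLinearMap.proj_apply, he]
  have hhe : (h' e : β → ℝ) = fun b => pd i (fun y => h y b) x := by
    funext b
    simp [hh'def, pd, ContinuousLinearMap.pi_apply, he]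
  have hge : (g' e : α → ℝ) = fun a => pd i (fun y => g y a) x := by
    funext a
    simp [hg'def, pd, ContinuousLinearMap.pi_apply, he]
  rw [hpd, ← hhe, ← hge]
  calc |B (g x) (h' e) K + B (g' e) (h x) K|
      ≤ ‖B (g x) (h' e)‖ + ‖B (g' e) (h x)‖ := by
        refine le_trans (abs_add_le _ _) (add_le_add ?_ ?_)
        · rw [← Real.norm_eq_abs]; exact norm_le_pi_norm _ K
        · rw [← Real.norm_eq_abs]; exact norm_le_pi_norm _ K
    _ ≤ ‖B‖ * ‖g x‖ * ‖h' e‖ + ‖B‖ * ‖g' e‖ * ‖h x‖ :=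
        add_le_add (B.le_opNorm₂ _ _) (B.le_opNorm₂ _ _)
    _ = ‖B‖ * (‖g x‖ * ‖h' e‖ + ‖g' e‖ * ‖h x‖) := by ring

lemma integrable_abs_mul {f g : Spc n → ℝ} (hf : MemLp f 2 volume)
    (hg : MemLp g 2 volume) : Integrable (fun x => |f x| * |g x|) volume := by
  have hm : AEStronglyMeasurable (fun x => |f x| * |g x|) volume := by
    have := hf.aestronglyMeasurable.norm.mul hg.aestronglyMeasurable.norm
    simp only [Real.norm_eq_abs] at this
    exact this
  refine Integrable.mono'
    (((hf.integrable_sq.add hg.integrable_sq)).const_mul (1/2)) hm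
    (ae_of_all _ fun x => ?_)
  rw [Real.norm_eq_abs, abs_mul, abs_abs, abs_abs]
  simp only [Pi.add_apply]
  nlinarith [sq_nonneg (|f x| - |g x|), sq_abs (f x), sq_abs (g x),
    abs_nonneg (f x), abs_nonneg (g x)]

lemma young_pair {f g : Spc n → ℝ} (hf : MemLp f 2 volume) (hg : MemLp g 2 volume)
    {K θ : ℝ} (hK : 0 ≤ K) (hθ : 0 < θ) :
    K * ∫ x, |f x| * |g x| ≤
      θ/2 * (∫ x, (f x)^2) + K^2/(2*θ) * (∫ x, (g x)^2) := by
  have hint : Integrable (fun x => θ/2 * (f x)^2 + K^2/(2*θ) * (g x)^2) volume :=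
    (hf.integrable_sq.const_mul _).add (hg.integrable_sq.const_mul _)
  have h1 : ∫ x, K * (|f x| * |g x|) ≤
      ∫ x, (θ/2 * (f x)^2 + K^2/(2*θ) * (g x)^2) := by
    refine integral_mono_of_nonneg (ae_of_all _ fun x => by positivity) hint
      (ae_of_all _ fun x => ?_)
    have key : 2 * θ * (K * (|f x| * |g x|)) ≤ 2 * θ * (θ/2 * (f x)^2 + K^2/(2*θ) * (g x)^2) := by
      have e : 2 * θ * (θ/2 * (f x)^2 + K^2/(2*θ) * (g x)^2) = θ^2 * (f x)^2 + K^2 * (g x)^2 := by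
        field_simp
      rw [e]
      nlinarith [sq_nonneg (θ * |f x| - K * |g x|), sq_abs (f x), sq_abs (g x), abs_nonneg (f x), abs_nonneg (g x), mul_nonneg (abs_nonneg (f x)) (abs_nonneg (g x))]
    exact le_of_mul_le_mul_left key (by positivity)
  calc K * ∫ x, |f x| * |g x| = ∫ x, K * (|f x| * |g x|) := (integral_const_mul _ _).symm
    _ ≤ _ := h1
    _ = θ/2 * (∫ x, (f x)^2) + K^2/(2*θ) * (∫ x, (g x)^2) := by
        rw [integral_add (hf.integrable_sq.const_mul _) (hg.integrable_sq.const_mul _),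
          integral_const_mul, integral_const_mul]

lemma idx_nonempty (hq : q ≤ n) : Nonempty (Idx n q) := by
  obtain ⟨t, -, ht⟩ := Finset.exists_subset_card_eq (s := (Finset.univ : Finset (Fin n))) (by simpa using hq)
  exact ⟨⟨t, ht⟩⟩

end helpers
section helpers2

variable {n q : ℕ}

lemma abs_mul_int_le {f g : Spc n → ℝ} (hf : MemLp f 2 volume) (hg : MemLp g 2 volume) :
    ∫ x, |f x| * |g x| ≤ 1/2 * (∫ x, (f x)^2) + 1/2 * (∫ x, (g x)^2) := by
  have := young_pair hf hg (K := 1) (θ := 1) zero_le_one one_pos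
  simpa using this

lemma mul_sum_mul2 {ι κ : Type*} [Fintype ι] [Fintype κ] (a z : ℝ) (F : ι → κ → ℝ) :
    (a * ∑ i : ι, ∑ j : κ, F i j) * z = ∑ i : ι, ∑ j : κ, a * (F i j * z) := by
  simp [Finset.sum_mul, Finset.mul_sum, mul_assoc]

lemma mul_sum_mul1 {ι : Type*} [Fintype ι] (a z : ℝ) (F : ι → ℝ) :
    (a * ∑ i : ι, F i) * z = ∑ i : ι, a * (F i * z) := by
  simp [Finset.sum_mul, Finset.mul_sum, mul_assoc]

lemma final_sum {ι₁ ι₂ : Type*} [Fintype ι₁] [Fintype ι₂] (S : ι₁ → ι₂ → ℝ) (L : ι₁ → ℝ)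
    (a b c : ℝ) :
    ∑ I : ι₁, ((∑ i : ι₂, ∑ I' : ι₁, (a * S I' i + b * L I))
        + ∑ I' : ι₁, c * (1/2 * L I' + 1/2 * L I))
      = (Fintype.card ι₁ : ℝ) * a * (∑ I' : ι₁, ∑ i : ι₂, S I' i)
        + ((Fintype.card ι₂ : ℝ) * (Fintype.card ι₁ : ℝ) * b
            + (Fintype.card ι₁ : ℝ) * c) * (∑ I : ι₁, L I) := by
  simp only [Finset.sum_add_distrib, Finset.sum_const, Finset.card_univ, nsmul_eq_mul,
    ← Finset.mul_sum]
  rw [Finset.sum_comm]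
  ring

end helpers2
set_option maxHeartbeats 1600000

/-- the energy estimate for the pairing `(B_q(w,u)(·,t), u(·,t))_{L²}`. -/
theorem stmt10 (n q : ℕ) (hn : 2 ≤ n) (hq : q ≤ n) (δ μ T : ℝ)
    (hδ : (n : ℝ) / 2 < δ) (hμ : 0 < μ) (hT : 0 < T)
    (M₁ : M1Type n q) (M₂ : M2Type n q) :
    ∃ c₁ c₂ : ℝ, 0 < c₁ ∧ 0 < c₂ ∧
      ∀ w u : FormT n q,
        (∀ I, ∀ t ∈ Set.Icc (0 : ℝ) T, ContDiff ℝ 1 (fun y => w I t y)) →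
        eSupT T δ w ≠ ⊤ → eSupGradT T (δ + 1) w ≠ ⊤ →
        (∀ I, ∀ t ∈ Set.Icc (0 : ℝ) T, ContDiff ℝ 1 (fun y => u I t y)) →
        (∀ I, ∀ t ∈ Set.Icc (0 : ℝ) T, MemLp (fun x => u I t x) 2 volume) →
        (∀ I, ∀ i : Fin n, ∀ t ∈ Set.Icc (0 : ℝ) T,
          MemLp (fun x => pd i (fun y => u I t y) x) 2 volume) →
        (∀ I, ∀ t ∈ Set.Icc (0 : ℝ) T,
          Integrable (fun x => Bop M₁ M₂ w u I t x * u I t x) volume) →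
        ∀ t ∈ Set.Icc (0 : ℝ) T,
          |∑ I : Idx n q, ∫ x : Spc n, Bop M₁ M₂ w u I t x * u I t x| ≤
            μ / 2 * gradSq u t +
              (2 * c₂ ^ 2 / μ * ((eSupT T δ w).toReal) ^ 2 +
                  c₁ * (eSupGradT T (δ + 1) w).toReal) * l2Sq u t := by
  classical
  have hIne : Nonempty (Idx n q) := idx_nonempty hq
  set C₁ : ℝ := ‖bil2 M₁‖ with hC₁def
  set C₂ : ℝ := ‖bil2 M₂‖ with hC₂def
  have hC₁0 : 0 ≤ C₁ := (bil2 M₁).opNorm_nonneg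
  have hC₂0 : 0 ≤ C₂ := (bil2 M₂).opNorm_nonneg
  set c₂' : ℝ := C₁ + 2*C₂ + 1 with hc₂'def
  set c₁' : ℝ := n*(C₁ + 2*C₂) + 1 with hc₁'def
  have hc₂'pos : 0 < c₂' := by rw [hc₂'def]; positivity
  have hc₁'pos : 0 < c₁' := by rw [hc₁'def]; positivity
  set N : ℝ := (Fintype.card (Idx n q) : ℝ) with hNdef
  have hN1 : (1:ℝ) ≤ N := by
    rw [hNdef]; exact_mod_cast Fintype.card_pos
  have hN0 : (0:ℝ) < N := lt_of_lt_of_le zero_lt_one hN1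
  have hn0 : (0:ℝ) < n := by exact_mod_cast (by omega : 0 < n)
  have hsqn : 0 < Real.sqrt n := Real.sqrt_pos.mpr hn0
  refine ⟨c₁' * N, c₂' * N * Real.sqrt n / 2, mul_pos hc₁'pos hN0, by positivity, ?_⟩
  intro w u hwC hwS hwG huC huL2 hpdL2 hBint t ht
  set A : ℝ := (eSupT T δ w).toReal with hAdef
  set Bv : ℝ := (eSupGradT T (δ+1) w).toReal with hBvdef
  have hA0 : 0 ≤ A := ENNReal.toReal_nonneg
  have hBv0 : 0 ≤ Bv := ENNReal.toReal_nonneg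
  have hδ0 : (0:ℝ) ≤ δ := le_trans (by positivity) hδ.le
  have hδ10 : (0:ℝ) ≤ δ + 1 := by linarith
  have hwb : ∀ (I : Idx n q) (x : Spc n), |w I t x| ≤ A :=
    fun I x => abs_le_eSupT hδ0 w hwS I ht x
  have hwg : ∀ (I : Idx n q) (i : Fin n) (x : Spc n), |pd i (fun y => w I t y) x| ≤ Bv :=
    fun I i x => abs_pd_le_eSupGradT hδ10 w hwG I i ht x
  -- pointwise auxiliary quantities
  set Q : Fin n → Spc n → ℝ := fun i x => ∑ I' : Idx n q, |pd i (fun y => u I' t y) x|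
    with hQdef
  set P : Spc n → ℝ := fun x => ∑ i : Fin n, Q i x with hPdef
  set U : Spc n → ℝ := fun x => ∑ I' : Idx n q, |u I' t x| with hUdef
  have hQ0 : ∀ i x, 0 ≤ Q i x := fun i x => by
    simp only [hQdef]; exact Finset.sum_nonneg fun _ _ => abs_nonneg _
  have hP0 : ∀ x, 0 ≤ P x := fun x => by
    simp only [hPdef]; exact Finset.sum_nonneg fun i _ => hQ0 i x
  have hU0 : ∀ x, 0 ≤ U x := fun x => by
    simp only [hUdef]; exact Finset.sum_nonneg fun _ _ => abs_nonneg _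
  have hQle : ∀ (i : Fin n) (I' : Idx n q) (x : Spc n),
      |pd i (fun y => u I' t y) x| ≤ Q i x := fun i I' x => by
    simp only [hQdef]
    exact Finset.single_le_sum (f := fun I'' : Idx n q => |pd i (fun y => u I'' t y) x|)
      (fun _ _ => abs_nonneg _) (Finset.mem_univ I')
  have hUle : ∀ (I' : Idx n q) (x : Spc n), |u I' t x| ≤ U x := fun I' x => by
    simp only [hUdef]
    exact Finset.single_le_sum (f := fun I'' : Idx n q => |u I'' t x|)
      (fun _ _ => abs_nonneg _) (Finset.mem_univ I')
  have hfibu : ∀ x, ‖fib u t x‖ ≤ U x := fun x =>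
    (pi_norm_le_iff_of_nonneg (hU0 x)).2 fun I' => by
      rw [Real.norm_eq_abs]; exact hUle I' x
  have hfibw : ∀ x, ‖fib w t x‖ ≤ A := fun x =>
    (pi_norm_le_iff_of_nonneg hA0).2 fun I' => by
      rw [Real.norm_eq_abs]; exact hwb I' x
  have hddu : ∀ x, ‖ddFib u t x‖ ≤ P x := by
    intro x
    refine norm_prod_le_iff.2 ⟨?_, ?_⟩
    · refine (pi_norm_le_iff_of_nonneg (hP0 x)).2 fun J => ?_
      rw [Real.norm_eq_abs]
      exact abs_dS_le (fun I => u I t) x (fun i => Q i x) (fun i => hQ0 i x)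
        (fun i I' => hQle i I' x) J
    · refine (pi_norm_le_iff_of_nonneg (hP0 x)).2 fun K => ?_
      rw [Real.norm_eq_abs]
      exact abs_coDS_le (fun I => u I t) x (fun i => Q i x) (fun i => hQ0 i x)
        (fun i I' => hQle i I' x) K
  have hddw : ∀ x, ‖ddFib w t x‖ ≤ (n:ℝ) * Bv := by
    intro x
    have hnB : (0:ℝ) ≤ (n:ℝ) * Bv := by positivity
    refine norm_prod_le_iff.2 ⟨?_, ?_⟩
    · refine (pi_norm_le_iff_of_nonneg hnB).2 fun J => ?_
      rw [Real.norm_eq_abs]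
      have := abs_dS_le (fun I => w I t) x (fun _ => Bv) (fun _ => hBv0)
        (fun i I' => hwg I' i x) J
      show |dS (fun I => w I t) J x| ≤ (n:ℝ) * Bv
      simpa [Finset.sum_const, Finset.card_univ, nsmul_eq_mul] using this
    · refine (pi_norm_le_iff_of_nonneg hnB).2 fun K => ?_
      rw [Real.norm_eq_abs]
      have := abs_coDS_le (fun I => w I t) x (fun _ => Bv) (fun _ => hBv0)
        (fun i I' => hwg I' i x) K
      show |coDS (fun I => w I t) K x| ≤ (n:ℝ) * Bv
      simpa [Finset.sum_const, Finset.card_univ, nsmul_eq_mul] using this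
  -- the pointwise bound
  have key : ∀ (I : Idx n q) (x : Spc n),
      |Bop M₁ M₂ w u I t x| ≤ c₂' * A * P x + c₁' * Bv * U x := by
    intro I x
    have t1 : |M₁ (ddFib u t x) (fib w t x) I| ≤ C₁ * P x * A :=
      bil2_entry_le M₁ _ _ I (hddu x) (hfibw x)
    have t2 : |M₁ (ddFib w t x) (fib u t x) I| ≤ C₁ * ((n:ℝ) * Bv) * U x :=
      bil2_entry_le M₁ _ _ I (hddw x) (hfibu x)
    have hdu : ∀ a : Idx n q, DifferentiableAt ℝ (fun y => u a t y) x :=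
      fun a => ((huC a t ht).differentiable one_ne_zero).differentiableAt
    have hdw : ∀ a : Idx n q, DifferentiableAt ℝ (fun y => w a t y) x :=
      fun a => ((hwC a t ht).differentiable one_ne_zero).differentiableAt
    have hdfu : DifferentiableAt ℝ (fun y => fib u t y) x := differentiableAt_pi.2 hdu
    have hdfw : DifferentiableAt ℝ (fun y => fib w t y) x := differentiableAt_pi.2 hdw
    have t3 : |dLowT (fun K t' x' =>
          M₂ (fib u t' x') (fib w t' x') K + M₂ (fib w t' x') (fib u t' x') K) I t x|
        ≤ ∑ i : Fin n, (C₂ * (U x * Bv + Q i x * A) + C₂ * (A * Q i x + Bv * U x)) := by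
      refine abs_dLowS_le _ x _ (fun i => ?_) (fun i K => ?_) I
      · exact add_nonneg
          (mul_nonneg hC₂0 (add_nonneg (mul_nonneg (hU0 x) hBv0)
            (mul_nonneg (hQ0 i x) hA0)))
          (mul_nonneg hC₂0 (add_nonneg (mul_nonneg hA0 (hQ0 i x))
            (mul_nonneg hBv0 (hU0 x))))
      · -- bound pd of the bilinear coefficient
        have d1' : DifferentiableAt ℝ (fun y => bil2 M₂ (fib u t y) (fib w t y)) x :=
          ((bil2 M₂).differentiableAt.comp x hdfu).clm_apply hdfw
        have d2' : DifferentiableAt ℝ (fun y => bil2 M₂ (fib w t y) (fib u t y)) x :=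
          ((bil2 M₂).differentiableAt.comp x hdfw).clm_apply hdfu
        have d1 : DifferentiableAt ℝ (fun y => bil2 M₂ (fib u t y) (fib w t y) K) x :=
          (ContinuousLinearMap.proj (R := ℝ) (φ := fun _ : Idx n (q-1) => ℝ)
            K).differentiableAt.comp x d1'
        have d2 : DifferentiableAt ℝ (fun y => bil2 M₂ (fib w t y) (fib u t y) K) x :=
          (ContinuousLinearMap.proj (R := ℝ) (φ := fun _ : Idx n (q-1) => ℝ)
            K).differentiableAt.comp x d2'
        have hsplit : pd i (fun y =>
              M₂ (fib u t y) (fib w t y) K + M₂ (fib w t y) (fib u t y) K) x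
            = pd i (fun y => bil2 M₂ (fib u t y) (fib w t y) K) x
              + pd i (fun y => bil2 M₂ (fib w t y) (fib u t y) K) x :=
          pd_add d1 d2 i
        have hnw : ‖fun b => pd i (fun y => fib w t y b) x‖ ≤ Bv :=
          (pi_norm_le_iff_of_nonneg hBv0).2 fun b => by
            rw [Real.norm_eq_abs]; exact hwg b i x
        have hnu : ‖fun a => pd i (fun y => fib u t y a) x‖ ≤ Q i x :=
          (pi_norm_le_iff_of_nonneg (hQ0 i x)).2 fun a => by
            rw [Real.norm_eq_abs]; exact hQle i a x
        have b1 : |pd i (fun y => bil2 M₂ (fib u t y) (fib w t y) K) x|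
            ≤ C₂ * (U x * Bv + Q i x * A) := by
          refine (pd_clm_bilin_le (bil2 M₂) (fun y => fib u t y) (fun y => fib w t y)
            hdu hdw i K).trans ?_
          refine mul_le_mul_of_nonneg_left ?_ hC₂0
          exact add_le_add
            (mul_le_mul (hfibu x) hnw (norm_nonneg _) (hU0 x))
            (mul_le_mul hnu (hfibw x) (norm_nonneg _) (hQ0 i x))
        have b2 : |pd i (fun y => bil2 M₂ (fib w t y) (fib u t y) K) x|
            ≤ C₂ * (A * Q i x + Bv * U x) := by
          refine (pd_clm_bilin_le (bil2 M₂) (fun y => fib w t y) (fun y => fib u t y)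
            hdw hdu i K).trans ?_
          refine mul_le_mul_of_nonneg_left ?_ hC₂0
          exact add_le_add
            (mul_le_mul (hfibw x) hnu (norm_nonneg _) hA0)
            (mul_le_mul hnw (hfibu x) (norm_nonneg _) hBv0)
        calc |pd i (fun y =>
              M₂ (fib u t y) (fib w t y) K + M₂ (fib w t y) (fib u t y) K) x|
            = |pd i (fun y => bil2 M₂ (fib u t y) (fib w t y) K) x
              + pd i (fun y => bil2 M₂ (fib w t y) (fib u t y) K) x| := by rw [hsplit]
          _ ≤ _ := (abs_add_le _ _).trans (add_le_add b1 b2)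
    have hsum : ∑ i : Fin n, (C₂ * (U x * Bv + Q i x * A) + C₂ * (A * Q i x + Bv * U x))
        = 2*C₂*A*P x + (n:ℝ)*(2*C₂*Bv*U x) := by
      rw [Finset.sum_congr rfl (fun i (_ : i ∈ Finset.univ) =>
        (by ring : C₂ * (U x * Bv + Q i x * A) + C₂ * (A * Q i x + Bv * U x)
          = 2*C₂*A*Q i x + 2*C₂*Bv*U x)), Finset.sum_add_distrib, ← Finset.mul_sum,
        Finset.sum_const, Finset.card_univ, nsmul_eq_mul]
      simp only [hPdef, Fintype.card_fin]
    have habs : |Bop M₁ M₂ w u I t x|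
        ≤ |M₁ (ddFib u t x) (fib w t x) I| + |M₁ (ddFib w t x) (fib u t x) I|
          + |dLowT (fun K t' x' =>
            M₂ (fib u t' x') (fib w t' x') K + M₂ (fib w t' x') (fib u t' x') K) I t x| := by
      have hB : Bop M₁ M₂ w u I t x
          = M₁ (ddFib u t x) (fib w t x) I + M₁ (ddFib w t x) (fib u t x) I
            + dLowT (fun K t' x' =>
              M₂ (fib u t' x') (fib w t' x') K + M₂ (fib w t' x') (fib u t' x') K) I t x :=
        rfl
      rw [hB]
      exact (abs_add_le _ _).trans (add_le_add_left (abs_add_le _ _) _)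
    calc |Bop M₁ M₂ w u I t x|
        ≤ C₁ * P x * A + C₁ * ((n:ℝ) * Bv) * U x
          + (2*C₂*A*P x + (n:ℝ)*(2*C₂*Bv*U x)) :=
          habs.trans (add_le_add (add_le_add t1 t2) (t3.trans_eq hsum))
      _ ≤ c₂' * A * P x + c₁' * Bv * U x := by
          rw [hc₂'def, hc₁'def]
          nlinarith [mul_nonneg hA0 (hP0 x), mul_nonneg hBv0 (hU0 x), hC₁0, hC₂0]
  -- integral estimates
  have hu2 : ∀ I : Idx n q, MemLp (fun x => u I t x) 2 volume := fun I => huL2 I t ht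
  have hp2 : ∀ (I : Idx n q) (i : Fin n),
      MemLp (fun x => pd i (fun y => u I t y) x) 2 volume := fun I i => hpdL2 I i t ht
  have hθ : (0:ℝ) < μ / N := div_pos hμ hN0
  have hK2 : (0:ℝ) ≤ c₂' * A := mul_nonneg hc₂'pos.le hA0
  have main : ∀ I : Idx n q, |∫ x, Bop M₁ M₂ w u I t x * u I t x|
      ≤ (∑ i : Fin n, ∑ I' : Idx n q,
          ((μ/N)/2 * (∫ x, (pd i (fun y => u I' t y) x)^2)
            + (c₂'*A)^2/(2*(μ/N)) * (∫ x, (u I t x)^2)))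
        + ∑ I' : Idx n q, (c₁' * Bv)
            * (1/2 * (∫ x, (u I' t x)^2) + 1/2 * (∫ x, (u I t x)^2)) := by
    intro I
    have s1 : |∫ x, Bop M₁ M₂ w u I t x * u I t x|
        ≤ ∫ x, |Bop M₁ M₂ w u I t x| * |u I t x| := by
      calc |∫ x, Bop M₁ M₂ w u I t x * u I t x|
          = ‖∫ x, Bop M₁ M₂ w u I t x * u I t x‖ := (Real.norm_eq_abs _).symm
        _ ≤ ∫ x, ‖Bop M₁ M₂ w u I t x * u I t x‖ := norm_integral_le_integral_norm _
        _ = ∫ x, |Bop M₁ M₂ w u I t x| * |u I t x| := by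
            simp [Real.norm_eq_abs, abs_mul]
    set R : Spc n → ℝ := fun x =>
      (∑ i : Fin n, ∑ I' : Idx n q,
          (c₂'*A) * (|pd i (fun y => u I' t y) x| * |u I t x|))
        + ∑ I' : Idx n q, (c₁' * Bv) * (|u I' t x| * |u I t x|) with hRdef
    have hint1 : Integrable (fun x => ∑ i : Fin n, ∑ I' : Idx n q,
        (c₂'*A) * (|pd i (fun y => u I' t y) x| * |u I t x|)) volume :=
      integrable_finset_sum _ fun i _ => integrable_finset_sum _ fun I' _ =>
        (integrable_abs_mul (hp2 I' i) (hu2 I)).const_mul _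
    have hint2 : Integrable (fun x => ∑ I' : Idx n q,
        (c₁' * Bv) * (|u I' t x| * |u I t x|)) volume :=
      integrable_finset_sum _ fun I' _ =>
        (integrable_abs_mul (hu2 I') (hu2 I)).const_mul _
    have hRint : Integrable R volume := hint1.add hint2
    have s2 : ∫ x, |Bop M₁ M₂ w u I t x| * |u I t x| ≤ ∫ x, R x := by
      refine integral_mono_of_nonneg
        (ae_of_all _ fun x => mul_nonneg (abs_nonneg _) (abs_nonneg _)) hRint
        (ae_of_all _ fun x => ?_)
      have h1 : |Bop M₁ M₂ w u I t x| * |u I t x|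
          ≤ (c₂' * A * P x + c₁' * Bv * U x) * |u I t x| :=
        mul_le_mul_of_nonneg_right (key I x) (abs_nonneg _)
      refine h1.trans_eq ?_
      rw [hRdef, add_mul]
      simp only [hPdef, hQdef, hUdef]
      congr 1
      · exact mul_sum_mul2 _ _ _
      · exact mul_sum_mul1 _ _ _
    have s3 : ∫ x, R x
        = (∑ i : Fin n, ∑ I' : Idx n q,
            (c₂'*A) * ∫ x, |pd i (fun y => u I' t y) x| * |u I t x|)
          + ∑ I' : Idx n q, (c₁' * Bv) * ∫ x, |u I' t x| * |u I t x| := by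
      rw [hRdef]
      rw [integral_add hint1 hint2]
      congr 1
      · rw [integral_finset_sum _ (fun i _ => integrable_finset_sum _ fun I' _ =>
          (integrable_abs_mul (hp2 I' i) (hu2 I)).const_mul _)]
        refine Finset.sum_congr rfl fun i _ => ?_
        rw [integral_finset_sum _ (fun I' _ =>
          (integrable_abs_mul (hp2 I' i) (hu2 I)).const_mul _)]
        exact Finset.sum_congr rfl fun I' _ => integral_const_mul _ _
      · rw [integral_finset_sum _ (fun I' _ =>
          (integrable_abs_mul (hu2 I') (hu2 I)).const_mul _)]
        exact Finset.sum_congr rfl fun I' _ => integral_const_mul _ _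
    refine (s1.trans (s2.trans_eq s3)).trans (add_le_add ?_ ?_)
    · refine Finset.sum_le_sum fun i _ => Finset.sum_le_sum fun I' _ => ?_
      exact young_pair (hp2 I' i) (hu2 I) hK2 hθ
    · refine Finset.sum_le_sum fun I' _ => ?_
      exact mul_le_mul_of_nonneg_left (abs_mul_int_le (hu2 I') (hu2 I))
        (mul_nonneg hc₁'pos.le hBv0)
  calc |∑ I : Idx n q, ∫ x, Bop M₁ M₂ w u I t x * u I t x|
      ≤ ∑ I : Idx n q, |∫ x, Bop M₁ M₂ w u I t x * u I t x| :=
        Finset.abs_sum_le_sum_abs _ _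
    _ ≤ ∑ I : Idx n q, ((∑ i : Fin n, ∑ I' : Idx n q,
          ((μ/N)/2 * (∫ x, (pd i (fun y => u I' t y) x)^2)
            + (c₂'*A)^2/(2*(μ/N)) * (∫ x, (u I t x)^2)))
        + ∑ I' : Idx n q, (c₁' * Bv)
            * (1/2 * (∫ x, (u I' t x)^2) + 1/2 * (∫ x, (u I t x)^2))) :=
        Finset.sum_le_sum fun I _ => main I
    _ = μ / 2 * gradSq u t
        + (2 * (c₂' * N * Real.sqrt n / 2) ^ 2 / μ * A ^ 2 + (c₁' * N) * Bv) * l2Sq u t := by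
        rw [final_sum (fun I' i => ∫ x, (pd i (fun y => u I' t y) x)^2)
          (fun I => ∫ x, (u I t x)^2) ((μ/N)/2) ((c₂'*A)^2/(2*(μ/N))) (c₁' * Bv)]
        have hcard2 : (Fintype.card (Fin n) : ℝ) = (n:ℝ) := by simp
        have hcard1 : (Fintype.card (Idx n q) : ℝ) = N := hNdef.symm
        rw [hcard2, hcard1]
        have hG : (∑ I' : Idx n q, ∑ i : Fin n, ∫ x, (pd i (fun y => u I' t y) x)^2)
            = gradSq u t := rfl
        have hLq : (∑ I : Idx n q, ∫ x, (u I t x)^2) = l2Sq u t := rfl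
        rw [hG, hLq]
        have hN0' : N ≠ 0 := ne_of_gt hN0
        have hμ0 : μ ≠ 0 := ne_of_gt hμ
        have e1 : N * ((μ/N)/2) = μ/2 := by field_simp
        have e2 : (n:ℝ) * N * ((c₂'*A)^2/(2*(μ/N)))
            = 2 * (c₂' * N * Real.sqrt n / 2) ^ 2 / μ * A ^ 2 := by
          rw [show (c₂' * N * Real.sqrt n / 2) ^ 2
            = c₂'^2 * N^2 * (Real.sqrt n)^2 / 4 by ring,
            Real.sq_sqrt (le_of_lt hn0)]
          field_simp
          ring
        have e3 : N * (c₁' * Bv) = (c₁' * N) * Bv := by ring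
        rw [e1, e2, e3]
  
end NSdeRham

end
end
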